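/- arXiv:2103.12153 — 2 statements merged into one kernel-verified Lean document; each statement's English description precedes it below -/
import Mathlib

section
/- Let k be a positive integer and let G be a finite simple graph in which every cycle has length at least 2k+3. Then every subgraph of G that is a k-evine is contained in a unique maximal k-evine of G, namely the k-eball at its central edge e: the k-eball at e contains the given k-evine and every k-evine of G containing the given k-evine is a subgraph of the k-eball at e. -/
open SimpleGraph

/-- The eccentricity (`ℕ∞`-valued) of a vertex: supremum of extended distances to
all vertices.  It is infinite if the graph is disconnected. -/
noncomputable def eccent {V : Type*} (G : SimpleGraph V) (v : V) : ℕ∞ :=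
  ⨆ w, G.edist v w

/-- The radius (`ℕ∞`-valued) of a graph: minimum eccentricity. -/
noncomputable def gradius {V : Type*} (G : SimpleGraph V) : ℕ∞ :=
  ⨅ v, _root_.eccent G v

/-- The diameter (`ℕ∞`-valued) of a graph: maximum distance between two vertices. -/
noncomputable def gdiam {V : Type*} (G : SimpleGraph V) : ℕ∞ :=
  ⨆ v, ⨆ w, G.edist v w

/-- Two graphs on `Fin n` have the same `k`-deck: there is a bijection `φ` between the
`k`-element vertex subsets such that for each subset `s` the subgraph induced by `s` in the
first graph is isomorphic to the subgraph induced by `φ s` in the second. -/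
def SameDeck {n : ℕ} (G H : SimpleGraph (Fin n)) (k : ℕ) : Prop :=
  ∃ φ : {s : Finset (Fin n) // s.card = k} ≃ {s : Finset (Fin n) // s.card = k},
    ∀ s : {s : Finset (Fin n) // s.card = k},
      Nonempty ((SimpleGraph.induce (↑s.1 : Set (Fin n)) G) ≃g
                (SimpleGraph.induce (↑(φ s).1 : Set (Fin n)) H))

/-- A `k`-evine: a tree with diameter exactly `2k+1`. -/
def IsEvine {V : Type*} (k : ℕ) (A : SimpleGraph V) : Prop :=
  A.IsTree ∧ gdiam A = ((2 * k + 1 : ℕ) : ℕ∞)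

/-- The `k`-eball at an edge `uv` of `G`: the subgraph induced by all vertices at
distance at most `k` from `u` or from `v`. -/
def kEball {V : Type*} (G : SimpleGraph V) (u v : V) (k : ℕ) : G.Subgraph :=
  (⊤ : G.Subgraph).induce {w | G.edist u w ≤ (k : ℕ∞) ∨ G.edist v w ≤ (k : ℕ∞)}

/-- A `k`-central edge of `G`: an edge `uv` whose `k`-eball contains a `k`-evine
whose central edge is `uv` (its two endpoints having eccentricity `k+1` in the evine). -/
def IsKCentralEdge {V : Type*} (k : ℕ) (G : SimpleGraph V) (u v : V) : Prop :=
  G.Adj u v ∧ ∃ (B : G.Subgraph) (hu : u ∈ B.verts) (hv : v ∈ B.verts),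
    B ≤ kEball G u v k ∧ IsEvine k B.coe ∧ B.Adj u v ∧
    _root_.eccent B.coe ⟨u, hu⟩ = ((k + 1 : ℕ) : ℕ∞) ∧
    _root_.eccent B.coe ⟨v, hv⟩ = ((k + 1 : ℕ) : ℕ∞)

open SimpleGraph Walk

section EvAux

variable {V : Type*} {G : SimpleGraph V}

lemma Ev.endpoints_eq_of_length_zero {a b : V} (p : G.Walk a b) (h : p.length = 0) : a = b := by
  cases p with
  | nil => rfl
  | cons h' p' => simp at h

lemma Ev.length_eq_one_of_edge_mem {a b : V} {p : G.Walk a b} (hp : p.IsPath)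
    (he : s(a, b) ∈ p.edges) : p.length = 1 := by
  cases p with
  | nil => simp at he
  | @cons _ c _ h' p' =>
    rw [Walk.edges_cons, List.mem_cons] at he
    rw [Walk.cons_isPath_iff] at hp
    rcases he with he | he
    · rw [Sym2.eq_iff] at he
      rcases he with ⟨-, hbc⟩ | ⟨hac, -⟩
      · subst hbc
        rw [Walk.isPath_iff_eq_nil.mp hp.1]
        rfl
      · exact absurd hac h'.ne
    · exact absurd (p'.fst_mem_support_of_mem_edges he) hp.2

lemma Ev.walk_eq_cons_nil_of_length_one {a b : V} (p : G.Walk a b) (h : p.length = 1) :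
    ∃ (hadj : G.Adj a b), p = Walk.cons hadj Walk.nil := by
  cases p with
  | nil => simp at h
  | @cons _ c _ h' p' =>
    simp only [Walk.length_cons] at h
    have h : p'.length = 0 := by omega
    have : c = b := Ev.endpoints_eq_of_length_zero p' h
    subst this
    have : p' = Walk.nil := by
      cases p' with
      | nil => rfl
      | cons _ _ => simp at h
    subst this
    exact ⟨h', rfl⟩

/-- Two distinct paths with the same endpoints yield a cycle no longer than their
total length. -/
lemma Ev.exists_cycle_of_two_paths :
    ∀ (n : ℕ) {a b : V} (p q : G.Walk a b), p.length + q.length ≤ n →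
      p.IsPath → q.IsPath → p ≠ q →
      ∃ (c : V) (w : G.Walk c c), w.IsCycle ∧ w.length ≤ p.length + q.length := by
  intro n
  classical
  induction n with
  | zero =>
    intro a b p q hlen hp hq hne
    have hp0 : p.length = 0 := by omega
    have hq0 : q.length = 0 := by omega
    have hab : a = b := Ev.endpoints_eq_of_length_zero p hp0
    subst hab
    rw [Walk.isPath_iff_eq_nil.mp hp, Walk.isPath_iff_eq_nil.mp hq] at hne
    exact absurd rfl hne
  | succ n ih =>
    intro a b p q hlen hp hq hne
    by_cases hint : ∃ x, x ∈ p.support ∧ x ∈ q.support ∧ x ≠ a ∧ x ≠ b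
    · obtain ⟨x, hxp, hxq, hxa, hxb⟩ := hint
      have hps := p.take_spec hxp
      have hqs := q.take_spec hxq
      have hplen : (p.takeUntil x hxp).length + (p.dropUntil x hxp).length = p.length := by
        have := congrArg Walk.length hps; rwa [Walk.length_append] at this
      have hqlen : (q.takeUntil x hxq).length + (q.dropUntil x hxq).length = q.length := by
        have := congrArg Walk.length hqs; rwa [Walk.length_append] at this
      have hpt_pos : 0 < (p.takeUntil x hxp).length := by
        rcases Nat.eq_zero_or_pos (p.takeUntil x hxp).length with h0 | h
        · exact absurd (Ev.endpoints_eq_of_length_zero _ h0).symm hxa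
        · exact h
      have hpd_pos : 0 < (p.dropUntil x hxp).length := by
        rcases Nat.eq_zero_or_pos (p.dropUntil x hxp).length with h0 | h
        · exact absurd (Ev.endpoints_eq_of_length_zero _ h0) hxb
        · exact h
      have hqt_pos : 0 < (q.takeUntil x hxq).length := by
        rcases Nat.eq_zero_or_pos (q.takeUntil x hxq).length with h0 | h
        · exact absurd (Ev.endpoints_eq_of_length_zero _ h0).symm hxa
        · exact h
      have hqd_pos : 0 < (q.dropUntil x hxq).length := by
        rcases Nat.eq_zero_or_pos (q.dropUntil x hxq).length with h0 | h
        · exact absurd (Ev.endpoints_eq_of_length_zero _ h0) hxb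
        · exact h
      by_cases h1 : p.takeUntil x hxp = q.takeUntil x hxq
      · by_cases h2 : p.dropUntil x hxp = q.dropUntil x hxq
        · exfalso; apply hne
          rw [← hps, ← hqs, h1, h2]
        · obtain ⟨c, w, hw, hwl⟩ := ih (p.dropUntil x hxp) (q.dropUntil x hxq)
            (by omega) (hp.dropUntil hxp) (hq.dropUntil hxq) h2
          exact ⟨c, w, hw, by omega⟩
      · obtain ⟨c, w, hw, hwl⟩ := ih (p.takeUntil x hxp) (q.takeUntil x hxq)
          (by omega) (hp.takeUntil hxp) (hq.takeUntil hxq) h1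
        exact ⟨c, w, hw, by omega⟩
    · push_neg at hint
      by_cases hab : a = b
      · subst hab
        rw [Walk.isPath_iff_eq_nil.mp hp, Walk.isPath_iff_eq_nil.mp hq] at hne
        exact absurd rfl hne
      cases p with
      | nil => exact absurd rfl hab
      | @cons _ c _ h' p' =>
        rw [Walk.cons_isPath_iff] at hp
        set r := q.reverse with hr
        have hrp : r.IsPath := hq.reverse
        have hdisj : ∀ z ∈ p'.support, z ∈ q.support → z = a ∨ z = b := by
          intro z hz1 hz2
          have hz1' : z ∈ (Walk.cons h' p').support := by
            rw [Walk.support_cons]; exact List.mem_cons_of_mem _ hz1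
          rcases eq_or_ne z a with h | h
          · exact Or.inl h
          · exact Or.inr (hint z hz1' hz2 h)
        have hbr : b ∉ r.support.tail := by
          intro hmem
          have := hrp.support_nodup
          rw [r.support_eq_cons] at this
          exact (List.nodup_cons.mp this).1 hmem
        have hpath : (p'.append r).IsPath := by
          rw [Walk.isPath_def, Walk.support_append, List.nodup_append]
          have htail : r.support.tail.Nodup := by
            have hnd := hrp.support_nodup
            rw [r.support_eq_cons, List.nodup_cons] at hnd
            exact hnd.2
          refine ⟨hp.1.support_nodup, htail, ?_⟩
          intro z hz1 z' hz2 hzz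
          subst hzz
          have hzq : z ∈ q.support := by
            have : z ∈ r.support := List.mem_of_mem_tail hz2
            rw [hr, Walk.support_reverse, List.mem_reverse] at this
            exact this
          rcases hdisj z hz1 hzq with h | h
          · subst h; exact hp.2 hz1
          · subst h; exact hbr hz2
        have hedge : s(a, c) ∉ (p'.append r).edges := by
          rw [Walk.edges_append, List.mem_append]
          rintro (hmem | hmem)
          · exact hp.2 (p'.fst_mem_support_of_mem_edges hmem)
          · have hq' : s(a, c) ∈ q.edges := by
              rw [hr, Walk.edges_reverse, List.mem_reverse] at hmem
              exact hmem
            have hcq : c ∈ q.support := q.snd_mem_support_of_mem_edges hq'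
            have hcp : c ∈ p'.support := p'.start_mem_support
            rcases hdisj c hcp hcq with h | h
            · exact h'.ne' h
            · subst h
              have hp'nil : p' = Walk.nil := Walk.isPath_iff_eq_nil.mp hp.1
              have hq1 : q.length = 1 := Ev.length_eq_one_of_edge_mem hq hq'
              obtain ⟨hadj, hqe⟩ := Ev.walk_eq_cons_nil_of_length_one q hq1
              apply hne
              subst hp'nil hqe
              rfl
        refine ⟨a, Walk.cons h' (p'.append r), ?_, ?_⟩
        · exact (Walk.cons_isCycle_iff _ h').mpr ⟨hpath, hedge⟩
        · simp only [Walk.length_cons, Walk.length_append, hr, Walk.length_reverse]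
          omega

section Girth
variable {g : ℕ} (hg : ∀ (v : V) (c : G.Walk v v), c.IsCycle → g ≤ c.length)
include hg

/-- With girth at least `g`, two paths with total length `< g` coincide. -/
lemma Ev.path_eq_of_short {a b : V} {p q : G.Walk a b} (hp : p.IsPath) (hq : q.IsPath)
    (hlen : p.length + q.length < g) : p = q := by
  by_contra hne
  obtain ⟨c, w, hw, hwl⟩ :=
    Ev.exists_cycle_of_two_paths (p.length + q.length) p q le_rfl hp hq hne
  exact absurd (hg c w hw) (by omega)

/-- A short path is a geodesic. -/
lemma Ev.edist_eq_length_of_short {a b : V} {p : G.Walk a b} (hp : p.IsPath)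
    (hlen : 2 * p.length < g) : G.edist a b = p.length := by
  classical
  refine le_antisymm (edist_le p) ?_
  have hne : G.edist a b ≠ ⊤ := by
    apply ne_top_of_le_ne_top _ (edist_le p)
    exact ENat.coe_ne_top _
  obtain ⟨w, hw⟩ := exists_walk_of_edist_ne_top hne
  have hwb : (w.bypass.length : ℕ∞) ≤ G.edist a b := by
    rw [← hw]; exact_mod_cast Nat.cast_le.mpr w.length_bypass_le
  have hble : w.bypass.length ≤ p.length := by
    have := edist_le p
    have h2 : (w.bypass.length : ℕ∞) ≤ (p.length : ℕ∞) := le_trans hwb this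
    exact_mod_cast h2
  have heq : p = w.bypass := Ev.path_eq_of_short hg hp w.bypass_isPath (by omega)
  rw [heq]
  exact hwb
end Girth

/-- In a nonempty finite type, an `ℕ∞`-valued supremum is attained. -/
lemma Ev.exists_eq_iSup {ι : Type*} [Nonempty ι] [Finite ι] (f : ι → ℕ∞) :
    ∃ i, (⨆ j, f j) = f i := by
  obtain ⟨i, hi⟩ := Finite.exists_max f
  exact ⟨i, le_antisymm (iSup_le hi) (le_iSup f i)⟩

/-- A geodesic path realizing a finite `edist`. -/
lemma Ev.exists_path_of_reachable {a b : V} (h : G.Reachable a b) :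
    ∃ p : G.Walk a b, p.IsPath ∧ (p.length : ℕ∞) = G.edist a b := by
  classical
  obtain ⟨w, hw⟩ := h.exists_walk_length_eq_edist
  refine ⟨w.bypass, w.bypass_isPath, le_antisymm ?_ ?_⟩
  · rw [← hw]; exact_mod_cast Nat.cast_le.mpr w.length_bypass_le
  · exact edist_le w.bypass

/-- In an acyclic graph every path is a geodesic. -/
lemma Ev.edist_eq_length_of_acyclic (hA : G.IsAcyclic) {a b : V} {p : G.Walk a b}
    (hp : p.IsPath) : G.edist a b = p.length := by
  refine le_antisymm (edist_le p) ?_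
  obtain ⟨q, hq, hql⟩ := Ev.exists_path_of_reachable ⟨p⟩
  have : p = q := by
    have := hA.path_unique ⟨p, hp⟩ ⟨q, hq⟩
    exact congrArg Subtype.val this
  rw [this, hql]

/-- In an acyclic graph, distances from the ends of an edge to any vertex differ. -/
lemma Ev.edist_ne_of_adj_acyclic (hA : G.IsAcyclic) {u v w : V} (huv : G.Adj u v)
    (hr : G.Reachable u w) : G.edist u w ≠ G.edist v w := by
  classical
  intro heq
  have hrv : G.Reachable v w := (huv.symm.reachable).trans hr
  obtain ⟨p, hp, hpl⟩ := Ev.exists_path_of_reachable hr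
  obtain ⟨q, hq, hql⟩ := Ev.exists_path_of_reachable hrv
  have hlen : p.length = q.length := by
    have : (p.length : ℕ∞) = (q.length : ℕ∞) := by rw [hpl, hql, heq]
    exact_mod_cast this
  by_cases hvp : v ∈ p.support
  · have hts := p.take_spec hvp
    have htl : (p.takeUntil v hvp).length + (p.dropUntil v hvp).length = p.length := by
      have := congrArg Walk.length hts; rwa [Walk.length_append] at this
    have htpos : 0 < (p.takeUntil v hvp).length := by
      rcases Nat.eq_zero_or_pos (p.takeUntil v hvp).length with h0 | h
      · exact absurd (Ev.endpoints_eq_of_length_zero _ h0) huv.ne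
      · exact h
    have : G.edist v w ≤ (p.dropUntil v hvp).length := edist_le _
    rw [← heq, ← hpl] at this
    have : p.length ≤ (p.dropUntil v hvp).length := by exact_mod_cast this
    omega
  · have hcons : (Walk.cons huv.symm p).IsPath := by
      rw [Walk.cons_isPath_iff]; exact ⟨hp, hvp⟩
    have := hA.path_unique ⟨q, hq⟩ ⟨Walk.cons huv.symm p, hcons⟩
    have hval : q = Walk.cons huv.symm p := congrArg Subtype.val this
    have : q.length = p.length + 1 := by rw [hval]; simp
    omega

/-- Distances in a subgraph dominate distances in the ambient graph. -/
lemma Ev.edist_le_subgraph (H : G.Subgraph) (a b : H.verts) :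
    G.edist a b ≤ H.coe.edist a b := by
  rcases eq_or_ne (H.coe.edist a b) ⊤ with h | h
  · rw [h]; exact le_top
  · obtain ⟨w, hw⟩ := exists_walk_of_edist_ne_top h
    calc G.edist a b ≤ ((w.map H.hom).length : ℕ∞) := edist_le _
    _ = (w.length : ℕ∞) := by rw [Walk.length_map]
    _ = H.coe.edist a b := hw

/-- Distances shrink when a subgraph is enlarged. -/
lemma Ev.edist_le_of_le {H H' : G.Subgraph} (hle : H ≤ H') (a b : H.verts) :
    H'.coe.edist (Subgraph.inclusion hle a) (Subgraph.inclusion hle b) ≤ H.coe.edist a b := by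
  rcases eq_or_ne (H.coe.edist a b) ⊤ with h | h
  · rw [h]; exact le_top
  · obtain ⟨w, hw⟩ := exists_walk_of_edist_ne_top h
    calc H'.coe.edist _ _ ≤ ((w.map (Subgraph.inclusion hle)).length : ℕ∞) := edist_le _
    _ = (w.length : ℕ∞) := by rw [Walk.length_map]
    _ = H.coe.edist a b := hw

/-- Lifting a walk of `G` into an induced subgraph containing its support. -/
lemma Ev.lift_walk {s : Set V} {a b : V} (p : G.Walk a b)
    (hsupp : ∀ x ∈ p.support, x ∈ s) (ha : a ∈ s) (hb : b ∈ s) :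
    ∃ w : ((⊤ : G.Subgraph).induce s).coe.Walk ⟨a, ha⟩ ⟨b, hb⟩, w.length = p.length := by
  induction p with
  | nil => exact ⟨Walk.nil, rfl⟩
  | @cons a c b h p ih =>
    have hc : c ∈ s :=
      hsupp c (by rw [Walk.support_cons]; exact List.mem_cons_of_mem _ p.start_mem_support)
    have hsupp' : ∀ x ∈ p.support, x ∈ s := fun x hx =>
      hsupp x (by rw [Walk.support_cons]; exact List.mem_cons_of_mem _ hx)
    obtain ⟨w, hw⟩ := ih hsupp' hc hb
    have hadj : ((⊤ : G.Subgraph).induce s).coe.Adj ⟨a, ha⟩ ⟨c, hc⟩ := by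
      simp only [Subgraph.coe_adj, Subgraph.induce_adj, Subgraph.top_adj]
      exact ⟨ha, hc, h⟩
    exact ⟨Walk.cons hadj w, by simp [hw]⟩

/-- Appending an edge to a path avoiding the new endpoint. -/
lemma Ev.concat_isPath {a b c : V} {p : G.Walk a b} (hp : p.IsPath) (h : G.Adj b c)
    (hc : c ∉ p.support) : (p.concat h).IsPath := by
  rw [Walk.isPath_def, Walk.support_concat, List.nodup_append]
  exact ⟨hp.support_nodup, List.nodup_singleton c,
    fun z hz z' hz' hzz => by rw [List.mem_singleton] at hz'; rw [hzz, hz'] at hz; exact hc hz⟩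

/-- No vertex farther away than the length of a geodesic lies on it. -/
lemma Ev.not_mem_support_of_edist_lt {a b : V} {p : G.Walk a b} {t : V}
    (ht : (p.length : ℕ∞) < G.edist a t) : t ∉ p.support := by
  classical
  intro hmem
  have h1 : G.edist a t ≤ (p.takeUntil t hmem).length := edist_le _
  have h2 : (p.takeUntil t hmem).length ≤ p.length := Walk.length_takeUntil_le p hmem
  have : G.edist a t ≤ (p.length : ℕ∞) := le_trans h1 (by exact_mod_cast h2)
  exact absurd (lt_of_lt_of_le ht this) (lt_irrefl _)

/-- Glue two paths sharing only their starting point into a path. -/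
lemma Ev.join_paths {a b c : V} {p : G.Walk a b} {q : G.Walk a c}
    (hp : p.IsPath) (hq : q.IsPath) (hshare : ∀ z, z ∈ p.support → z ∈ q.support → z = a) :
    ∃ r : G.Walk b c, r.IsPath ∧ r.length = p.length + q.length := by
  refine ⟨p.reverse.append q, ?_, by simp⟩
  rw [Walk.isPath_def, Walk.support_append, List.nodup_append]
  have hq_tail_nodup : q.support.tail.Nodup := by
    have hnd := hq.support_nodup
    rw [q.support_eq_cons, List.nodup_cons] at hnd
    exact hnd.2
  have ha_tail : a ∉ q.support.tail := by
    have hnd := hq.support_nodup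
    rw [q.support_eq_cons, List.nodup_cons] at hnd
    exact hnd.1
  refine ⟨by rw [Walk.support_reverse]; exact List.nodup_reverse.mpr hp.support_nodup, hq_tail_nodup, ?_⟩
  intro z hz1 z' hz2 hzz
  subst hzz
  have hz1' : z ∈ p.support := by rwa [Walk.support_reverse, List.mem_reverse] at hz1
  have hz2' : z ∈ q.support := List.mem_of_mem_tail hz2
  have := hshare z hz1' hz2'
  subst this
  exact ha_tail hz2

end EvAux

section Ball

variable {V : Type*} {G : SimpleGraph V} {k : ℕ}

/-- Two vertices joined by an edge cannot be equidistant (at distance `≤ k`) from a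
common vertex, when the girth is at least `2k+3`. -/
lemma Ev.not_equidistant (hgirth : ∀ (x : V) (c : G.Walk x x), c.IsCycle → 2 * k + 3 ≤ c.length)
    (c : V) {x y : V} (hxy : G.Adj x y) {m : ℕ} (hm : m ≤ k)
    (hx : G.edist c x = (m : ℕ∞)) (hy : G.edist c y = (m : ℕ∞)) : False := by
  classical
  have hrx : G.Reachable c x := reachable_of_edist_ne_top (by rw [hx]; exact ENat.coe_ne_top _)
  have hry : G.Reachable c y := reachable_of_edist_ne_top (by rw [hy]; exact ENat.coe_ne_top _)
  obtain ⟨px, hpx, hpxl⟩ := Ev.exists_path_of_reachable hrx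
  obtain ⟨py, hpy, hpyl⟩ := Ev.exists_path_of_reachable hry
  have hpxm : px.length = m := by rw [hx] at hpxl; exact_mod_cast hpxl
  have hpym : py.length = m := by rw [hy] at hpyl; exact_mod_cast hpyl
  have hxny : x ∉ py.support := by
    intro hmem
    have hsplit : (py.takeUntil x hmem).length + (py.dropUntil x hmem).length = py.length := by
      have := congrArg Walk.length (py.take_spec hmem)
      rwa [Walk.length_append] at this
    have hdpos : 0 < (py.dropUntil x hmem).length := by
      rcases Nat.eq_zero_or_pos (py.dropUntil x hmem).length with h0 | h
      · exact absurd (Ev.endpoints_eq_of_length_zero _ h0) hxy.ne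
      · exact h
    have hle : G.edist c x ≤ (py.takeUntil x hmem).length := edist_le _
    rw [hx] at hle
    have : m ≤ (py.takeUntil x hmem).length := by exact_mod_cast hle
    omega
  have hq : (py.concat hxy.symm).IsPath := Ev.concat_isPath hpy hxy.symm hxny
  have heq : px = py.concat hxy.symm := by
    apply Ev.path_eq_of_short hgirth hpx hq
    rw [Walk.length_concat]
    omega
  have : px.length = (py.concat hxy.symm).length := congrArg Walk.length heq
  rw [Walk.length_concat] at this
  omega

variable {u v : V}

/-- Membership set of the `k`-eball. -/
private abbrev ballSet (G : SimpleGraph V) (u v : V) (k : ℕ) : Set V :=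
  {w | G.edist u w ≤ (k : ℕ∞) ∨ G.edist v w ≤ (k : ℕ∞)}

lemma Ev.edist_le_succ_of_ball (huv : G.Adj u v) {x : V} (hx : x ∈ ballSet G u v k) :
    G.edist u x ≤ ((k + 1 : ℕ) : ℕ∞) ∧ G.edist v x ≤ ((k + 1 : ℕ) : ℕ∞) := by
  have huv1 : G.edist u v = 1 := edist_eq_one_iff_adj.mpr huv
  have hvu1 : G.edist v u = 1 := edist_eq_one_iff_adj.mpr huv.symm
  rcases hx with hx | hx
  · constructor
    · exact le_trans hx (by exact_mod_cast Nat.cast_le.mpr (Nat.le_succ k))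
    · calc G.edist v x ≤ G.edist v u + G.edist u x := SimpleGraph.edist_triangle
      _ ≤ 1 + (k : ℕ∞) := add_le_add (le_of_eq hvu1) hx
      _ = ((k + 1 : ℕ) : ℕ∞) := by push_cast; ring
  · constructor
    · calc G.edist u x ≤ G.edist u v + G.edist v x := SimpleGraph.edist_triangle
      _ ≤ 1 + (k : ℕ∞) := add_le_add (le_of_eq huv1) hx
      _ = ((k + 1 : ℕ) : ℕ∞) := by push_cast; ring
    · exact le_trans hx (by exact_mod_cast Nat.cast_le.mpr (Nat.le_succ k))

/-- Along an edge of the `k`-eball, the distance to `u` changes. -/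
lemma Ev.edist_ne_of_ball_adj
    (hgirth : ∀ (x : V) (c : G.Walk x x), c.IsCycle → 2 * k + 3 ≤ c.length)
    (huv : G.Adj u v) {x y : V} (hx : x ∈ ballSet G u v k) (hy : y ∈ ballSet G u v k)
    (hxy : G.Adj x y) : G.edist u x ≠ G.edist u y := by
  intro heq
  have hux : G.edist u x ≤ ((k + 1 : ℕ) : ℕ∞) := (Ev.edist_le_succ_of_ball huv hx).1
  have hne : G.edist u x ≠ ⊤ := ne_top_of_le_ne_top (ENat.coe_ne_top _) hux
  lift G.edist u x to ℕ using hne with m hm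
  have hmk1 : m ≤ k + 1 := by exact_mod_cast hux
  rcases Nat.lt_or_ge m (k + 1) with hmk | hmk
  · exact Ev.not_equidistant hgirth u hxy (by omega) hm.symm heq.symm
  · have hmeq : m = k + 1 := by omega
    subst hmeq
    -- both x and y are at distance exactly k from v
    have hxv : G.edist v x ≤ (k : ℕ∞) := by
      rcases hx with h | h
      · exfalso
        rw [← hm] at h
        have : (k + 1 : ℕ) ≤ k := by exact_mod_cast h
        omega
      · exact h
    have hyv : G.edist v y ≤ (k : ℕ∞) := by
      rcases hy with h | h
      · exfalso
        rw [← heq] at h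
        have : (k + 1 : ℕ) ≤ k := by exact_mod_cast h
        omega
      · exact h
    have huv1 : G.edist u v = 1 := edist_eq_one_iff_adj.mpr huv
    have hxvk : G.edist v x = (k : ℕ∞) := by
      refine le_antisymm hxv ?_
      have htri : G.edist u x ≤ G.edist u v + G.edist v x := SimpleGraph.edist_triangle
      rw [← hm, huv1] at htri
      have hne2 : G.edist v x ≠ ⊤ := ne_top_of_le_ne_top (ENat.coe_ne_top _) hxv
      lift G.edist v x to ℕ using hne2 with a ha
      have : (k + 1 : ℕ) ≤ 1 + a := by exact_mod_cast htri
      exact_mod_cast Nat.cast_le.mpr (by omega : k ≤ a)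
    have hyvk : G.edist v y = (k : ℕ∞) := by
      refine le_antisymm hyv ?_
      have htri : G.edist u y ≤ G.edist u v + G.edist v y := SimpleGraph.edist_triangle
      rw [← heq, huv1] at htri
      have hne2 : G.edist v y ≠ ⊤ := ne_top_of_le_ne_top (ENat.coe_ne_top _) hyv
      lift G.edist v y to ℕ using hne2 with a ha
      have : (k + 1 : ℕ) ≤ 1 + a := by exact_mod_cast htri
      exact_mod_cast Nat.cast_le.mpr (by omega : k ≤ a)
    exact Ev.not_equidistant hgirth v hxy le_rfl hxvk hyvk

end Ball

section Ball2

variable {V : Type*} {G : SimpleGraph V} {k : ℕ} {u v : V}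

/-- Lift a geodesic from `c` into an induced subgraph whose vertex set contains the
`k`-ball around `c`. -/
lemma Ev.exists_ball_walk {S : Set V} {c x : V} (hcS : c ∈ S) (hxS : x ∈ S)
    (hside : ∀ z, G.edist c z ≤ (k : ℕ∞) → z ∈ S) (hx : G.edist c x ≤ (k : ℕ∞)) :
    ∃ w : ((⊤ : G.Subgraph).induce S).coe.Walk ⟨c, hcS⟩ ⟨x, hxS⟩,
      (w.length : ℕ∞) ≤ G.edist c x := by
  classical
  have hr : G.Reachable c x :=
    reachable_of_edist_ne_top (ne_top_of_le_ne_top (ENat.coe_ne_top _) hx)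
  obtain ⟨p, hp, hpl⟩ := Ev.exists_path_of_reachable hr
  have hsupp : ∀ z ∈ p.support, z ∈ S := by
    intro z hz
    apply hside
    calc G.edist c z ≤ ((p.takeUntil z hz).length : ℕ∞) := edist_le _
    _ ≤ (p.length : ℕ∞) := by exact_mod_cast p.length_takeUntil_le hz
    _ = G.edist c x := hpl
    _ ≤ (k : ℕ∞) := hx
  obtain ⟨w, hw⟩ := Ev.lift_walk p hsupp hcS hxS
  exact ⟨w, by rw [hw, hpl]⟩

/-- The `k`-eball is acyclic when the girth is at least `2k+3`. -/
lemma Ev.ball_isAcyclic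
    (hgirth : ∀ (x : V) (c : G.Walk x x), c.IsCycle → 2 * k + 3 ≤ c.length)
    (huv : G.Adj u v) :
    ((⊤ : G.Subgraph).induce (ballSet G u v k)).coe.IsAcyclic := by
  classical
  intro z0 c hc
  set Bl := (⊤ : G.Subgraph).induce (ballSet G u v k) with hBl
  set cG := c.map Bl.hom with hcG_def
  have hcG : cG.IsCycle :=
    (Walk.map_isCycle_iff_of_injective (Subgraph.hom_injective)).mpr hc
  have hsuppS : ∀ z ∈ cG.support, z ∈ ballSet G u v k := by
    intro z hz
    rw [hcG_def, Walk.support_map, List.mem_map] at hz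
    obtain ⟨t, _, rfl⟩ := hz
    exact t.2
  set F : V → ℕ := fun t => (G.edist u t).toNat with hF
  haveI : Finite {t // t ∈ cG.support} := (cG.support.finite_toSet).to_subtype
  haveI : Nonempty {t // t ∈ cG.support} := ⟨⟨_, cG.start_mem_support⟩⟩
  obtain ⟨⟨x0, hx0⟩, hmax⟩ := Finite.exists_max (fun t : {t // t ∈ cG.support} => F t.1)
  set c2 := cG.rotate x0 hx0 with hc2def
  have hc2 : c2.IsCycle := hcG.rotate hx0
  have hlen2 : 2 * k + 3 ≤ c2.length := hgirth x0 c2 hc2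
  have hsub2 : ∀ z ∈ c2.support, z ∈ cG.support := by
    intro z hz
    rw [Walk.support_eq_cons] at hz
    rcases List.mem_cons.mp hz with h | h
    · rwa [h]
    · have : z ∈ cG.support.tail := (List.IsRotated.mem_iff (Walk.support_rotate cG x0 hx0)).mp h
      rw [Walk.support_eq_cons cG]
      exact List.mem_cons_of_mem _ this
  clear_value c2
  clear hc2def
  -- decompose the cycle at x0
  cases c2 with
  | nil => simp at hlen2
  | @cons _ y _ hxy q =>
    rw [Walk.cons_isCycle_iff] at hc2
    obtain ⟨hqpath, hqe⟩ := hc2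
    -- the last vertex of the cycle before x0
    have hqrev : ∃ (z : V) (h2 : G.Adj x0 z) (q2 : G.Walk z y), q.reverse = Walk.cons h2 q2 := by
      cases hrev : q.reverse with
      | nil =>
        exfalso
        have : q.length = 0 := by
          have := congrArg Walk.length hrev
          rwa [Walk.length_reverse] at this
        simp only [Walk.length_cons] at hlen2
        omega
      | cons h2 q2 => exact ⟨_, h2, q2, rfl⟩
    obtain ⟨z, h2, q2, hrev⟩ := hqrev
    have hzq_edge : s(x0, z) ∈ q.edges := by
      have : s(x0, z) ∈ q.reverse.edges := by rw [hrev, Walk.edges_cons]; exact List.mem_cons_self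
      rwa [Walk.edges_reverse, List.mem_reverse] at this
    have hyz : y ≠ z := by
      intro h
      subst h
      exact hqe hzq_edge
    -- memberships
    have hymem : y ∈ cG.support := by
      apply hsub2
      rw [Walk.support_cons]
      exact List.mem_cons_of_mem _ q.start_mem_support
    have hzmem : z ∈ cG.support := by
      apply hsub2
      rw [Walk.support_cons]
      apply List.mem_cons_of_mem
      have : z ∈ q.reverse.support := by
        rw [hrev, Walk.support_cons]
        exact List.mem_cons_of_mem _ q2.start_mem_support
      rwa [Walk.support_reverse, List.mem_reverse] at this
    have hx0S : x0 ∈ ballSet G u v k := hsuppS x0 hx0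
    have hyS : y ∈ ballSet G u v k := hsuppS y hymem
    have hzS : z ∈ ballSet G u v k := hsuppS z hzmem
    -- numeric facts
    have hEfin : ∀ t, t ∈ ballSet G u v k → G.edist u t = ((F t : ℕ) : ℕ∞) ∧ F t ≤ k + 1 := by
      intro t ht
      have hle : G.edist u t ≤ ((k + 1 : ℕ) : ℕ∞) := (Ev.edist_le_succ_of_ball huv ht).1
      have hne : G.edist u t ≠ ⊤ := ne_top_of_le_ne_top (ENat.coe_ne_top _) hle
      have hco : ((G.edist u t).toNat : ℕ∞) = G.edist u t := ENat.coe_toNat hne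
      refine ⟨hco.symm, ?_⟩
      rw [← hco] at hle
      exact_mod_cast hle
    obtain ⟨hEx0, hmle⟩ := hEfin x0 hx0S
    obtain ⟨hEy, -⟩ := hEfin y hyS
    obtain ⟨hEz, -⟩ := hEfin z hzS
    set m := F x0 with hm_def
    have hFy_le : F y ≤ m := hmax ⟨y, hymem⟩
    have hFz_le : F z ≤ m := hmax ⟨z, hzmem⟩
    have hedge1 : G.Adj x0 y := hxy
    have hney : F y ≠ m := by
      intro h
      apply Ev.edist_ne_of_ball_adj hgirth huv hx0S hyS hedge1
      rw [hEx0, hEy, h]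
    have hnez : F z ≠ m := by
      intro h
      apply Ev.edist_ne_of_ball_adj hgirth huv hx0S hzS h2
      rw [hEx0, hEz, h]
    have htri_y : m ≤ F y + 1 := by
      have h1 : G.edist u x0 ≤ G.edist u y + G.edist y x0 := SimpleGraph.edist_triangle
      rw [hEx0, hEy, edist_eq_one_iff_adj.mpr hedge1.symm] at h1
      exact_mod_cast h1
    have htri_z : m ≤ F z + 1 := by
      have h1 : G.edist u x0 ≤ G.edist u z + G.edist z x0 := SimpleGraph.edist_triangle
      rw [hEx0, hEz, edist_eq_one_iff_adj.mpr h2.symm] at h1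
      exact_mod_cast h1
    have hFy : F y = m - 1 := by omega
    have hFz : F z = m - 1 := by omega
    have hm1 : 1 ≤ m := by omega
    -- geodesics from u to y and z
    have hry : G.Reachable u y :=
      reachable_of_edist_ne_top (by rw [hEy]; exact ENat.coe_ne_top _)
    have hrz : G.Reachable u z :=
      reachable_of_edist_ne_top (by rw [hEz]; exact ENat.coe_ne_top _)
    obtain ⟨py, hpy, hpyl⟩ := Ev.exists_path_of_reachable hry
    obtain ⟨pz, hpz, hpzl⟩ := Ev.exists_path_of_reachable hrz
    have hpym : py.length = m - 1 := by
      rw [hEy, hFy] at hpyl; exact_mod_cast hpyl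
    have hpzm : pz.length = m - 1 := by
      rw [hEz, hFz] at hpzl; exact_mod_cast hpzl
    have hx0py : x0 ∉ py.support := by
      apply Ev.not_mem_support_of_edist_lt
      rw [hpym, hEx0]
      exact_mod_cast Nat.sub_lt hm1 one_pos
    have hx0pz : x0 ∉ pz.support := by
      apply Ev.not_mem_support_of_edist_lt
      rw [hpzm, hEx0]
      exact_mod_cast Nat.sub_lt hm1 one_pos
    have hq1 : (py.concat hedge1.symm).IsPath := Ev.concat_isPath hpy hedge1.symm hx0py
    have hq2 : (pz.concat h2.symm).IsPath := Ev.concat_isPath hpz h2.symm hx0pz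
    have heq12 : py.concat hedge1.symm = pz.concat h2.symm := by
      apply Ev.path_eq_of_short hgirth hq1 hq2
      rw [Walk.length_concat, Walk.length_concat, hpym, hpzm]
      omega
    have hedges := congrArg Walk.edges heq12
    rw [Walk.edges_concat, Walk.edges_concat] at hedges
    have hlast := congrArg List.getLast? hedges
    simp only [List.concat_eq_append, List.getLast?_concat] at hlast
    have h_edge_eq : s(y, x0) = s(z, x0) := Option.some.inj hlast
    rw [Sym2.eq_iff] at h_edge_eq
    rcases h_edge_eq with ⟨h, -⟩ | ⟨h, h'⟩
    · exact hyz h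
    · exact hedge1.ne' h

end Ball2

section Ecc

variable {V : Type*} {G : SimpleGraph V} {k : ℕ}

/-- Distances up to `k+1` transfer from a subgraph to a larger subgraph, when the
ambient graph has girth at least `2k+3`. -/
lemma Ev.edist_transfer
    (hgirth : ∀ (x : V) (c : G.Walk x x), c.IsCycle → 2 * k + 3 ≤ c.length)
    {H H' : G.Subgraph} (hle : H ≤ H') {a b : V} (ha : a ∈ H.verts) (hb : b ∈ H.verts)
    (ha' : a ∈ H'.verts) (hb' : b ∈ H'.verts) {n : ℕ}
    (hn : H.coe.edist ⟨a, ha⟩ ⟨b, hb⟩ = (n : ℕ∞)) (hnk : n ≤ k + 1) :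
    H'.coe.edist ⟨a, ha'⟩ ⟨b, hb'⟩ = (n : ℕ∞) := by
  classical
  have hinca : Subgraph.inclusion hle (⟨a, ha⟩ : H.verts) = (⟨a, ha'⟩ : H'.verts) :=
    Subtype.ext rfl
  have hincb : Subgraph.inclusion hle (⟨b, hb⟩ : H.verts) = (⟨b, hb'⟩ : H'.verts) :=
    Subtype.ext rfl
  have hub : H'.coe.edist ⟨a, ha'⟩ ⟨b, hb'⟩ ≤ (n : ℕ∞) := by
    have := Ev.edist_le_of_le hle ⟨a, ha⟩ ⟨b, hb⟩
    rw [hinca, hincb, hn] at this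
    exact this
  refine le_antisymm hub ?_
  have hne : H'.coe.edist ⟨a, ha'⟩ ⟨b, hb'⟩ ≠ ⊤ := ne_top_of_le_ne_top (ENat.coe_ne_top _) hub
  lift H'.coe.edist ⟨a, ha'⟩ ⟨b, hb'⟩ to ℕ using hne with m hm
  have hmn : m ≤ n := by exact_mod_cast hub
  -- realize both distances by paths and map them to G
  have hrH : H.coe.Reachable ⟨a, ha⟩ ⟨b, hb⟩ :=
    reachable_of_edist_ne_top (by rw [hn]; exact ENat.coe_ne_top _)
  have hrH' : H'.coe.Reachable ⟨a, ha'⟩ ⟨b, hb'⟩ :=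
    reachable_of_edist_ne_top (by rw [← hm]; exact ENat.coe_ne_top _)
  obtain ⟨p0, hp0, hp0l⟩ := Ev.exists_path_of_reachable hrH
  obtain ⟨q0, hq0, hq0l⟩ := Ev.exists_path_of_reachable hrH'
  have hp0n : p0.length = n := by rw [hn] at hp0l; exact_mod_cast hp0l
  have hq0m : q0.length = m := by rw [← hm] at hq0l; exact_mod_cast hq0l
  have hp : (p0.map H.hom).IsPath := Walk.map_isPath_of_injective Subgraph.hom_injective hp0
  have hq : (q0.map H'.hom).IsPath := Walk.map_isPath_of_injective Subgraph.hom_injective hq0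
  have heq : p0.map H.hom = q0.map H'.hom := by
    apply Ev.path_eq_of_short hgirth hp hq
    have h1 : (q0.map H'.hom).length = m := by rw [Walk.length_map, hq0m]
    simp only [Walk.length_map, hp0n]
    exact (congrArg (n + ·) h1).trans_lt (by omega : n + m < 2 * k + 3)
  have : n = m := by
    have := congrArg Walk.length heq
    have h2 : p0.length = q0.length :=
      (Walk.length_map H.hom p0).symm.trans (this.trans (Walk.length_map H'.hom q0))
    omega
  exact_mod_cast Nat.cast_le.mpr (le_of_eq this)

/-- In an acyclic graph of diameter at most `2k+1` containing an edge `uv` with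
"witness" vertices `x` (at distance `k+1` from `u`, `k` from `v`) and `y`
(at distance `k` from `u`, `k+1` from `v`), every vertex reachable from `u`
is at distance at most `k+1` from `u`. -/
lemma Ev.ecc_le {W : Type*} {T : SimpleGraph W} (hT : T.IsAcyclic)
    {u v x y : W} (huv : T.Adj u v)
    (hdiam : ∀ a b : W, T.edist a b ≤ ((2 * k + 1 : ℕ) : ℕ∞))
    (hux : T.edist u x = ((k + 1 : ℕ) : ℕ∞)) (hvx : T.edist v x = (k : ℕ∞))
    (huy : T.edist u y = (k : ℕ∞)) (hvy : T.edist v y = ((k + 1 : ℕ) : ℕ∞))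
    (w : W) (hr : T.Reachable u w) : T.edist u w ≤ ((k + 1 : ℕ) : ℕ∞) := by
  classical
  by_contra hgt
  push_neg at hgt
  have hne : T.edist u w ≠ ⊤ := edist_ne_top_iff_reachable.mpr hr
  lift T.edist u w to ℕ using hne with d hd
  have hd1 : k + 1 < d := by exact_mod_cast hgt
  have hd2 : d ≤ 2 * k + 1 := by
    have := hdiam u w
    rw [← hd] at this
    exact_mod_cast this
  -- realize geodesics
  obtain ⟨p, hp, hpl⟩ := Ev.exists_path_of_reachable hr
  have hplen : p.length = d := by rw [← hd] at hpl; exact_mod_cast hpl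
  have hrvx : T.Reachable v x :=
    reachable_of_edist_ne_top (by rw [hvx]; exact ENat.coe_ne_top _)
  have hruy : T.Reachable u y :=
    reachable_of_edist_ne_top (by rw [huy]; exact ENat.coe_ne_top _)
  obtain ⟨px0, hpx0, hpx0l⟩ := Ev.exists_path_of_reachable hrvx
  obtain ⟨puy, hpuy, hpuyl⟩ := Ev.exists_path_of_reachable hruy
  have hpx0len : px0.length = k := by rw [hvx] at hpx0l; exact_mod_cast hpx0l
  have hpuylen : puy.length = k := by rw [huy] at hpuyl; exact_mod_cast hpuyl
  have hu_not : u ∉ px0.support := by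
    intro hmem
    have hsplit : (px0.takeUntil u hmem).length + (px0.dropUntil u hmem).length = px0.length := by
      have := congrArg Walk.length (px0.take_spec hmem)
      rwa [Walk.length_append] at this
    have htpos : 0 < (px0.takeUntil u hmem).length := by
      rcases Nat.eq_zero_or_pos (px0.takeUntil u hmem).length with h0 | h
      · exact absurd (Ev.endpoints_eq_of_length_zero _ h0) huv.ne'
      · exact h
    have : T.edist u x ≤ ((px0.dropUntil u hmem).length : ℕ∞) := edist_le _
    rw [hux] at this
    have : k + 1 ≤ (px0.dropUntil u hmem).length := by exact_mod_cast this
    omega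
  have hv_not : v ∉ puy.support := by
    intro hmem
    have hsplit : (puy.takeUntil v hmem).length + (puy.dropUntil v hmem).length = puy.length := by
      have := congrArg Walk.length (puy.take_spec hmem)
      rwa [Walk.length_append] at this
    have htpos : 0 < (puy.takeUntil v hmem).length := by
      rcases Nat.eq_zero_or_pos (puy.takeUntil v hmem).length with h0 | h
      · exact absurd (Ev.endpoints_eq_of_length_zero _ h0) huv.ne
      · exact h
    have : T.edist v y ≤ ((puy.dropUntil v hmem).length : ℕ∞) := edist_le _
    rw [hvy] at this
    have : k + 1 ≤ (puy.dropUntil v hmem).length := by exact_mod_cast this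
    omega
  have hpux : (Walk.cons huv px0).IsPath := by
    rw [Walk.cons_isPath_iff]; exact ⟨hpx0, hu_not⟩
  -- decompose p at its first step
  cases p with
  | nil => simp at hplen; omega
  | @cons _ v1 _ h0 p2 =>
    rw [Walk.cons_isPath_iff] at hp
    obtain ⟨hp2, hu_not2⟩ := hp
    simp only [Walk.length_cons] at hplen
    by_cases hv1 : v1 = v
    · -- first step of the geodesic to w goes through v : use y
      have hshare : ∀ t, t ∈ puy.support → t ∈ (Walk.cons h0 p2).support → t = u := by
        intro t ht1 ht2
        by_contra htu
        have ht2' : t ∈ p2.support := by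
          rw [Walk.support_cons] at ht2
          rcases List.mem_cons.mp ht2 with h | h
          · exact absurd h htu
          · exact h
        have hr2path : (Walk.cons h0 (p2.takeUntil t ht2')).IsPath := by
          rw [Walk.cons_isPath_iff]
          exact ⟨hp2.takeUntil ht2', fun hmem =>
            hu_not2 (Walk.support_takeUntil_subset _ ht2' hmem)⟩
        have hr1path : (puy.takeUntil t ht1).IsPath := hpuy.takeUntil ht1
        have hequ := hT.path_unique ⟨puy.takeUntil t ht1, hr1path⟩
          ⟨Walk.cons h0 (p2.takeUntil t ht2'), hr2path⟩
        have hval : puy.takeUntil t ht1 = Walk.cons h0 (p2.takeUntil t ht2') :=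
          congrArg Subtype.val hequ
        apply hv_not
        apply Walk.support_takeUntil_subset puy ht1
        rw [hval, Walk.support_cons]
        apply List.mem_cons_of_mem
        rw [← hv1]
        exact (p2.takeUntil t ht2').start_mem_support
      obtain ⟨r, hrpath, hrlen⟩ := Ev.join_paths hpuy (by rw [Walk.cons_isPath_iff]; exact ⟨hp2, hu_not2⟩) hshare
      have : T.edist y w = r.length := Ev.edist_eq_length_of_acyclic hT hrpath
      have hcontra := hdiam y w
      rw [this] at hcontra
      have : r.length ≤ 2 * k + 1 := by exact_mod_cast hcontra
      rw [hrlen] at this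
      simp only [Walk.length_cons] at this
      omega
    · -- first step avoids v : use x
      have hshare : ∀ t, t ∈ (Walk.cons huv px0).support → t ∈ (Walk.cons h0 p2).support →
          t = u := by
        intro t ht1 ht2
        by_contra htu
        have ht1' : t ∈ px0.support := by
          rw [Walk.support_cons] at ht1
          rcases List.mem_cons.mp ht1 with h | h
          · exact absurd h htu
          · exact h
        have ht2' : t ∈ p2.support := by
          rw [Walk.support_cons] at ht2
          rcases List.mem_cons.mp ht2 with h | h
          · exact absurd h htu
          · exact h
        have hr1path : (Walk.cons huv (px0.takeUntil t ht1')).IsPath := by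
          rw [Walk.cons_isPath_iff]
          exact ⟨hpx0.takeUntil ht1', fun hmem =>
            hu_not (Walk.support_takeUntil_subset _ ht1' hmem)⟩
        have hr2path : (Walk.cons h0 (p2.takeUntil t ht2')).IsPath := by
          rw [Walk.cons_isPath_iff]
          exact ⟨hp2.takeUntil ht2', fun hmem =>
            hu_not2 (Walk.support_takeUntil_subset _ ht2' hmem)⟩
        have hequ := hT.path_unique ⟨Walk.cons huv (px0.takeUntil t ht1'), hr1path⟩
          ⟨Walk.cons h0 (p2.takeUntil t ht2'), hr2path⟩
        have hval : Walk.cons huv (px0.takeUntil t ht1') = Walk.cons h0 (p2.takeUntil t ht2') :=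
          congrArg Subtype.val hequ
        have hval1 := congrArg (fun q => Walk.getVert q 1) hval
        simp only [Walk.getVert_cons_succ, Walk.getVert_zero] at hval1
        exact hv1 hval1.symm
      obtain ⟨r, hrpath, hrlen⟩ := Ev.join_paths hpux (by rw [Walk.cons_isPath_iff]; exact ⟨hp2, hu_not2⟩) hshare
      have : T.edist x w = r.length := Ev.edist_eq_length_of_acyclic hT hrpath
      have hcontra := hdiam x w
      rw [this] at hcontra
      have : r.length ≤ 2 * k + 1 := by exact_mod_cast hcontra
      rw [hrlen] at this
      simp only [Walk.length_cons] at this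
      omega

end Ecc

/-- In a graph with girth at least `2k+3`, every subgraph that is a `k`-evine is
contained in a unique maximal `k`-evine, namely the `k`-eball at its central edge `uv`:
the `k`-eball at `uv` is a `k`-evine of `G`, it contains the given `k`-evine, and every
`k`-evine of `G` containing the given `k`-evine is a subgraph of the `k`-eball at `uv`. -/


theorem evine_absorbed_in_kEball {V : Type*} [Fintype V] (k : ℕ) (hk : 1 ≤ k)
    (G : SimpleGraph V)
    (hgirth : ∀ (v : V) (c : G.Walk v v), c.IsCycle → 2 * k + 3 ≤ c.length)
    (B : G.Subgraph) (hB : IsEvine k B.coe)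
    (u v : V) (hu : u ∈ B.verts) (hv : v ∈ B.verts) (hadj : B.Adj u v)
    (heccu : _root_.eccent B.coe ⟨u, hu⟩ = ((k + 1 : ℕ) : ℕ∞))
    (heccv : _root_.eccent B.coe ⟨v, hv⟩ = ((k + 1 : ℕ) : ℕ∞)) :
    IsEvine k (kEball G u v k).coe ∧ B ≤ kEball G u v k ∧
      ∀ B' : G.Subgraph, IsEvine k B'.coe → B ≤ B' → B' ≤ kEball G u v k := by
  classical
  set S : Set V := {w | G.edist u w ≤ (k : ℕ∞) ∨ G.edist v w ≤ (k : ℕ∞)} with hS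
  have hGadj : G.Adj u v := hadj.adj_sub
  have hBacyc : B.coe.IsAcyclic := hB.1.IsAcyclic
  have hBconn : B.coe.Connected := hB.1.isConnected
  have huS : u ∈ S := Or.inl (by rw [SimpleGraph.edist_self]; exact zero_le)
  have hvS : v ∈ S := Or.inr (by rw [SimpleGraph.edist_self]; exact zero_le)
  have hadjB : B.coe.Adj ⟨u, hu⟩ ⟨v, hv⟩ := hadj.coe
  have hBu_le : ∀ w : B.verts, B.coe.edist ⟨u, hu⟩ w ≤ ((k + 1 : ℕ) : ℕ∞) := fun w => by
    rw [← heccu]; exact le_iSup _ w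
  have hBv_le : ∀ w : B.verts, B.coe.edist ⟨v, hv⟩ w ≤ ((k + 1 : ℕ) : ℕ∞) := fun w => by
    rw [← heccv]; exact le_iSup _ w
  -- Part 2 : B ≤ kEball G u v k
  have hvertsS : ∀ w (hw : w ∈ B.verts), w ∈ S := by
    intro w hw
    have h1 := hBu_le ⟨w, hw⟩
    have h2 := hBv_le ⟨w, hw⟩
    have hner : B.coe.Reachable ⟨u, hu⟩ ⟨w, hw⟩ := hBconn.preconnected _ _
    have hnerv : B.coe.Reachable ⟨v, hv⟩ ⟨w, hw⟩ := (hadjB.symm.reachable).trans hner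
    have hne := Ev.edist_ne_of_adj_acyclic hBacyc hadjB hner
    have hne1 : B.coe.edist ⟨u, hu⟩ ⟨w, hw⟩ ≠ ⊤ := ne_top_of_le_ne_top (ENat.coe_ne_top _) h1
    have hne2 : B.coe.edist ⟨v, hv⟩ ⟨w, hw⟩ ≠ ⊤ := ne_top_of_le_ne_top (ENat.coe_ne_top _) h2
    lift B.coe.edist ⟨u, hu⟩ ⟨w, hw⟩ to ℕ using hne1 with d1 hd1
    lift B.coe.edist ⟨v, hv⟩ ⟨w, hw⟩ to ℕ using hne2 with d2 hd2
    have hd1k : d1 ≤ k + 1 := by exact_mod_cast h1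
    have hd2k : d2 ≤ k + 1 := by exact_mod_cast h2
    have hdne : d1 ≠ d2 := by
      intro h; apply hne; exact_mod_cast h
    rcases (by omega : d1 ≤ k ∨ d2 ≤ k) with h | h
    · left
      calc G.edist u w ≤ B.coe.edist ⟨u, hu⟩ ⟨w, hw⟩ := Ev.edist_le_subgraph B ⟨u, hu⟩ ⟨w, hw⟩
      _ = (d1 : ℕ∞) := hd1.symm
      _ ≤ (k : ℕ∞) := by exact_mod_cast h
    · right
      calc G.edist v w ≤ B.coe.edist ⟨v, hv⟩ ⟨w, hw⟩ := Ev.edist_le_subgraph B ⟨v, hv⟩ ⟨w, hw⟩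
      _ = (d2 : ℕ∞) := hd2.symm
      _ ≤ (k : ℕ∞) := by exact_mod_cast h
  have hpart2 : B ≤ kEball G u v k := by
    constructor
    · intro w hw
      exact hvertsS w hw
    · intro a b hab
      exact ⟨hvertsS a hab.fst_mem, hvertsS b hab.snd_mem, hab.adj_sub⟩
  -- the eball is acyclic
  have hacyc : (kEball G u v k).coe.IsAcyclic := Ev.ball_isAcyclic hgirth hGadj
  -- walks towards the two centers
  have hside_u : ∀ z, G.edist u z ≤ (k : ℕ∞) → z ∈ S := fun z h => Or.inl h
  have hside_v : ∀ z, G.edist v z ≤ (k : ℕ∞) → z ∈ S := fun z h => Or.inr h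
  have hadj_uv : (kEball G u v k).coe.Adj ⟨u, huS⟩ ⟨v, hvS⟩ := by
    simp only [Subgraph.coe_adj, kEball, Subgraph.induce_adj, Subgraph.top_adj]
    exact ⟨huS, hvS, hGadj⟩
  have hWalks : ∀ z (hz : z ∈ S),
      (∃ w : (kEball G u v k).coe.Walk ⟨u, huS⟩ ⟨z, hz⟩, w.length ≤ k) ∨
      (∃ w : (kEball G u v k).coe.Walk ⟨v, hvS⟩ ⟨z, hz⟩, w.length ≤ k) := by
    intro z hz
    rcases hz with h | h
    · left
      obtain ⟨w, hw⟩ := Ev.exists_ball_walk (k := k) huS (Or.inl h) hside_u h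
      refine ⟨w, ?_⟩
      have : (w.length : ℕ∞) ≤ (k : ℕ∞) := le_trans hw h
      exact_mod_cast this
    · right
      obtain ⟨w, hw⟩ := Ev.exists_ball_walk (k := k) hvS (Or.inr h) hside_v h
      refine ⟨w, ?_⟩
      have : (w.length : ℕ∞) ≤ (k : ℕ∞) := le_trans hw h
      exact_mod_cast this
  -- connectivity of the eball
  have hconn : (kEball G u v k).coe.Connected := by
    rw [connected_iff_exists_forall_reachable]
    refine ⟨⟨u, huS⟩, ?_⟩
    rintro ⟨z, hz⟩
    rcases hWalks z hz with ⟨w, -⟩ | ⟨w, -⟩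
    · exact ⟨w⟩
    · exact (hadj_uv.reachable).trans ⟨w⟩
  -- diameter bound for the eball
  have hdiam_le : ∀ a b : (kEball G u v k).verts,
      (kEball G u v k).coe.edist a b ≤ ((2 * k + 1 : ℕ) : ℕ∞) := by
    rintro ⟨a, haS⟩ ⟨b, hbS⟩
    rcases hWalks a haS with ⟨wa, hwa⟩ | ⟨wa, hwa⟩ <;>
      rcases hWalks b hbS with ⟨wb, hwb⟩ | ⟨wb, hwb⟩
    · calc (kEball G u v k).coe.edist ⟨a, haS⟩ ⟨b, hbS⟩
          ≤ ((wa.reverse.append wb).length : ℕ∞) := edist_le _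
      _ ≤ ((2 * k + 1 : ℕ) : ℕ∞) := by
          rw [Walk.length_append, Walk.length_reverse]
          have hsum : wa.length + wb.length ≤ 2 * k + 1 := by omega
          exact_mod_cast hsum
    · calc (kEball G u v k).coe.edist ⟨a, haS⟩ ⟨b, hbS⟩
          ≤ ((wa.reverse.append (Walk.cons hadj_uv wb)).length : ℕ∞) := edist_le _
      _ ≤ ((2 * k + 1 : ℕ) : ℕ∞) := by
          rw [Walk.length_append, Walk.length_reverse, Walk.length_cons]
          have hsum : wa.length + (wb.length + 1) ≤ 2 * k + 1 := by omega
          exact_mod_cast hsum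
    · calc (kEball G u v k).coe.edist ⟨a, haS⟩ ⟨b, hbS⟩
          ≤ ((wa.reverse.append (Walk.cons hadj_uv.symm wb)).length : ℕ∞) := edist_le _
      _ ≤ ((2 * k + 1 : ℕ) : ℕ∞) := by
          rw [Walk.length_append, Walk.length_reverse, Walk.length_cons]
          have hsum : wa.length + (wb.length + 1) ≤ 2 * k + 1 := by omega
          exact_mod_cast hsum
    · calc (kEball G u v k).coe.edist ⟨a, haS⟩ ⟨b, hbS⟩
          ≤ ((wa.reverse.append wb).length : ℕ∞) := edist_le _
      _ ≤ ((2 * k + 1 : ℕ) : ℕ∞) := by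
          rw [Walk.length_append, Walk.length_reverse]
          have hsum : wa.length + wb.length ≤ 2 * k + 1 := by omega
          exact_mod_cast hsum
  -- diameter is attained : a diametral pair of B
  haveI : Nonempty B.verts := ⟨⟨u, hu⟩⟩
  obtain ⟨x0, hx0⟩ := Ev.exists_eq_iSup (fun x : B.verts => ⨆ y, B.coe.edist x y)
  obtain ⟨y0, hy0⟩ := Ev.exists_eq_iSup (fun y : B.verts => B.coe.edist x0 y)
  have hxy0 : B.coe.edist x0 y0 = ((2 * k + 1 : ℕ) : ℕ∞) := by
    rw [← hy0, ← hx0]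
    exact hB.2
  have hrxy0 : B.coe.Reachable x0 y0 :=
    reachable_of_edist_ne_top (by rw [hxy0]; exact ENat.coe_ne_top _)
  obtain ⟨p0, hp0, hp0l⟩ := Ev.exists_path_of_reachable hrxy0
  have hp0len : p0.length = 2 * k + 1 := by rw [hxy0] at hp0l; exact_mod_cast hp0l
  have hpmap : (p0.map (Subgraph.inclusion hpart2)).IsPath :=
    Walk.map_isPath_of_injective (Subgraph.inclusion.injective hpart2) hp0
  have hdiam_ge : (kEball G u v k).coe.edist (Subgraph.inclusion hpart2 x0)
      (Subgraph.inclusion hpart2 y0) = ((2 * k + 1 : ℕ) : ℕ∞) := by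
    have := Ev.edist_eq_length_of_acyclic hacyc hpmap
    rw [Walk.length_map, hp0len] at this
    exact this
  have hdiam_eq : gdiam (kEball G u v k).coe = ((2 * k + 1 : ℕ) : ℕ∞) := by
    refine le_antisymm ?_ ?_
    · exact iSup_le fun a => iSup_le fun b => hdiam_le a b
    · rw [← hdiam_ge]
      exact le_trans (le_iSup _ (Subgraph.inclusion hpart2 y0))
        (le_iSup (fun x => ⨆ y, (kEball G u v k).coe.edist x y) (Subgraph.inclusion hpart2 x0))
  refine ⟨⟨⟨hconn, hacyc⟩, hdiam_eq⟩, hpart2, ?_⟩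
  -- Part 3
  intro B' hB' hBB'
  have hB'acyc : B'.coe.IsAcyclic := hB'.1.IsAcyclic
  have hB'conn : B'.coe.Connected := hB'.1.isConnected
  have hu' : u ∈ B'.verts := hBB'.1 hu
  have hv' : v ∈ B'.verts := hBB'.1 hv
  have hadj' : B'.coe.Adj ⟨u, hu'⟩ ⟨v, hv'⟩ := (hBB'.2 hadj).coe
  have hdiam' : ∀ a b : B'.verts, B'.coe.edist a b ≤ ((2 * k + 1 : ℕ) : ℕ∞) := by
    intro a b
    rw [← hB'.2]
    exact le_trans (le_iSup _ b) (le_iSup (fun x => ⨆ y, B'.coe.edist x y) a)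
  -- witnesses in B
  obtain ⟨x1, hx1⟩ := Ev.exists_eq_iSup (fun w : B.verts => B.coe.edist ⟨u, hu⟩ w)
  obtain ⟨y1, hy1⟩ := Ev.exists_eq_iSup (fun w : B.verts => B.coe.edist ⟨v, hv⟩ w)
  have hux1 : B.coe.edist ⟨u, hu⟩ x1 = ((k + 1 : ℕ) : ℕ∞) := by rw [← hx1]; exact heccu
  have hvy1 : B.coe.edist ⟨v, hv⟩ y1 = ((k + 1 : ℕ) : ℕ∞) := by rw [← hy1]; exact heccv
  have hBedist1 : B.coe.edist ⟨u, hu⟩ ⟨v, hv⟩ = 1 := edist_eq_one_iff_adj.mpr hadjB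
  have hvx1 : B.coe.edist ⟨v, hv⟩ x1 = (k : ℕ∞) := by
    have hle := hBv_le x1
    have hne : B.coe.edist ⟨u, hu⟩ x1 ≠ B.coe.edist ⟨v, hv⟩ x1 :=
      Ev.edist_ne_of_adj_acyclic hBacyc hadjB (hBconn.preconnected _ _)
    have htri : B.coe.edist ⟨u, hu⟩ x1 ≤ B.coe.edist ⟨u, hu⟩ ⟨v, hv⟩ +
        B.coe.edist ⟨v, hv⟩ x1 := SimpleGraph.edist_triangle
    rw [hux1, hBedist1] at htri
    have hnet : B.coe.edist ⟨v, hv⟩ x1 ≠ ⊤ := ne_top_of_le_ne_top (ENat.coe_ne_top _) hle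
    lift B.coe.edist ⟨v, hv⟩ x1 to ℕ using hnet with a ha
    have h1 : a ≤ k + 1 := by exact_mod_cast hle
    have h2 : a ≠ k + 1 := by
      intro h
      apply hne
      rw [hux1]
      exact_mod_cast congrArg (fun t : ℕ => (t : ℕ∞)) h.symm
    have h3 : (k + 1 : ℕ) ≤ 1 + a := by exact_mod_cast htri
    exact_mod_cast congrArg Nat.cast (by omega : a = k)
  have huy1 : B.coe.edist ⟨u, hu⟩ y1 = (k : ℕ∞) := by
    have hle := hBu_le y1
    have hne : B.coe.edist ⟨u, hu⟩ y1 ≠ B.coe.edist ⟨v, hv⟩ y1 :=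
      Ev.edist_ne_of_adj_acyclic hBacyc hadjB (hBconn.preconnected _ _)
    have htri : B.coe.edist ⟨v, hv⟩ y1 ≤ B.coe.edist ⟨v, hv⟩ ⟨u, hu⟩ +
        B.coe.edist ⟨u, hu⟩ y1 := SimpleGraph.edist_triangle
    rw [hvy1, edist_eq_one_iff_adj.mpr hadjB.symm] at htri
    have hnet : B.coe.edist ⟨u, hu⟩ y1 ≠ ⊤ := ne_top_of_le_ne_top (ENat.coe_ne_top _) hle
    lift B.coe.edist ⟨u, hu⟩ y1 to ℕ using hnet with a ha
    have h1 : a ≤ k + 1 := by exact_mod_cast hle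
    have h2 : a ≠ k + 1 := by
      intro h
      apply hne
      rw [hvy1]
      exact_mod_cast congrArg (fun t : ℕ => (t : ℕ∞)) h
    have h3 : (k + 1 : ℕ) ≤ 1 + a := by exact_mod_cast htri
    exact_mod_cast congrArg Nat.cast (by omega : a = k)
  -- transfer the witnesses to B'
  have hx1' : (x1 : V) ∈ B'.verts := hBB'.1 x1.2
  have hy1' : (y1 : V) ∈ B'.verts := hBB'.1 y1.2
  have hux1' : B'.coe.edist ⟨u, hu'⟩ ⟨x1, hx1'⟩ = ((k + 1 : ℕ) : ℕ∞) :=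
    Ev.edist_transfer hgirth hBB' hu x1.2 hu' hx1' hux1 le_rfl
  have hvx1' : B'.coe.edist ⟨v, hv'⟩ ⟨x1, hx1'⟩ = (k : ℕ∞) :=
    Ev.edist_transfer hgirth hBB' hv x1.2 hv' hx1' hvx1 (by omega)
  have huy1' : B'.coe.edist ⟨u, hu'⟩ ⟨y1, hy1'⟩ = (k : ℕ∞) :=
    Ev.edist_transfer hgirth hBB' hu y1.2 hu' hy1' huy1 (by omega)
  have hvy1' : B'.coe.edist ⟨v, hv'⟩ ⟨y1, hy1'⟩ = ((k + 1 : ℕ) : ℕ∞) :=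
    Ev.edist_transfer hgirth hBB' hv y1.2 hv' hy1' hvy1 le_rfl
  -- every vertex of B' lies in the eball
  have hverts' : ∀ w (hw : w ∈ B'.verts), w ∈ S := by
    intro w hw
    have hru : B'.coe.Reachable ⟨u, hu'⟩ ⟨w, hw⟩ := hB'conn.preconnected _ _
    have hrv : B'.coe.Reachable ⟨v, hv'⟩ ⟨w, hw⟩ := (hadj'.symm.reachable).trans hru
    have h1 : B'.coe.edist ⟨u, hu'⟩ ⟨w, hw⟩ ≤ ((k + 1 : ℕ) : ℕ∞) :=
      Ev.ecc_le hB'acyc hadj' hdiam' hux1' hvx1' huy1' hvy1' ⟨w, hw⟩ hru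
    have h2 : B'.coe.edist ⟨v, hv'⟩ ⟨w, hw⟩ ≤ ((k + 1 : ℕ) : ℕ∞) :=
      Ev.ecc_le hB'acyc hadj'.symm hdiam' hvy1' huy1' hvx1' hux1' ⟨w, hw⟩ hrv
    have hne := Ev.edist_ne_of_adj_acyclic hB'acyc hadj' hru
    have hne1 : B'.coe.edist ⟨u, hu'⟩ ⟨w, hw⟩ ≠ ⊤ := ne_top_of_le_ne_top (ENat.coe_ne_top _) h1
    have hne2 : B'.coe.edist ⟨v, hv'⟩ ⟨w, hw⟩ ≠ ⊤ := ne_top_of_le_ne_top (ENat.coe_ne_top _) h2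
    lift B'.coe.edist ⟨u, hu'⟩ ⟨w, hw⟩ to ℕ using hne1 with d1 hd1
    lift B'.coe.edist ⟨v, hv'⟩ ⟨w, hw⟩ to ℕ using hne2 with d2 hd2
    have hd1k : d1 ≤ k + 1 := by exact_mod_cast h1
    have hd2k : d2 ≤ k + 1 := by exact_mod_cast h2
    have hdne : d1 ≠ d2 := by
      intro h; apply hne; exact_mod_cast h
    rcases (by omega : d1 ≤ k ∨ d2 ≤ k) with h | h
    · left
      calc G.edist u w ≤ B'.coe.edist ⟨u, hu'⟩ ⟨w, hw⟩ := Ev.edist_le_subgraph B' ⟨u, hu'⟩ ⟨w, hw⟩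
      _ = (d1 : ℕ∞) := hd1.symm
      _ ≤ (k : ℕ∞) := by exact_mod_cast h
    · right
      calc G.edist v w ≤ B'.coe.edist ⟨v, hv'⟩ ⟨w, hw⟩ := Ev.edist_le_subgraph B' ⟨v, hv'⟩ ⟨w, hw⟩
      _ = (d2 : ℕ∞) := hd2.symm
      _ ≤ (k : ℕ∞) := by exact_mod_cast h
  constructor
  · intro w hw
    exact hverts' w hw
  · intro a b hab
    exact ⟨hverts' a hab.fst_mem, hverts' b hab.snd_mem, hab.adj_sub⟩
end

section
/- Let n, k, ℓ be positive integers with 2k+2 ≤ n−ℓ. Let G and H be n-vertex simple graphs having the same (n−ℓ)-deck. Suppose every (n−ℓ)-vertex induced subgraph of G is acyclic, has radius greater than k, and does not have diameter 2k+1. Then G and H have the same number of k-central edges. -/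
open SimpleGraph

namespace KCE

open SimpleGraph

variable {α β : Type*} {Γ : SimpleGraph α} {Γ' : SimpleGraph β}

lemma edist_hom_le (f : Γ →g Γ') (u v : α) : Γ'.edist (f u) (f v) ≤ Γ.edist u v := by
  by_cases hr : Γ.Reachable u v
  · obtain ⟨p, hp⟩ := hr.exists_walk_length_eq_edist
    calc Γ'.edist (f u) (f v) ≤ ((p.map f).length : ℕ∞) := edist_le _
      _ = (p.length : ℕ∞) := by rw [Walk.length_map]
      _ = Γ.edist u v := hp
  · rw [edist_eq_top_of_not_reachable hr]
    exact le_top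

lemma edist_iso (e : Γ ≃g Γ') (u v : α) : Γ'.edist (e u) (e v) = Γ.edist u v := by
  refine le_antisymm (edist_hom_le e.toHom u v) ?_
  have := edist_hom_le e.symm.toHom (e u) (e v)
  simpa using this

lemma eccent_iso (e : Γ ≃g Γ') (v : α) : _root_.eccent Γ' (e v) = _root_.eccent Γ v := by
  unfold _root_.eccent
  rw [← e.toEquiv.iSup_comp (g := fun w => Γ'.edist (e v) w)]
  exact iSup_congr fun w => edist_iso e v w

lemma gdiam_eq_iSup_eccent : gdiam Γ = ⨆ v, _root_.eccent Γ v := rfl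

lemma gdiam_iso (e : Γ ≃g Γ') : gdiam Γ' = gdiam Γ := by
  rw [gdiam_eq_iSup_eccent, gdiam_eq_iSup_eccent,
    ← e.toEquiv.iSup_comp (g := fun v => _root_.eccent Γ' v)]
  exact iSup_congr fun v => eccent_iso e v

lemma gradius_iso (e : Γ ≃g Γ') : gradius Γ' = gradius Γ := by
  unfold gradius
  rw [← e.toEquiv.iInf_comp (g := fun v => _root_.eccent Γ' v)]
  exact iInf_congr fun v => eccent_iso e v

lemma connected_iso (e : Γ ≃g Γ') (h : Γ.Connected) : Γ'.Connected :=
  h.map e.toHom e.toEquiv.surjective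

lemma acyclic_iso (e : Γ ≃g Γ') (h : Γ.IsAcyclic) : Γ'.IsAcyclic := by
  intro v c hc
  have hc' : (c.map e.symm.toHom).IsCycle := hc.map e.symm.toEquiv.injective
  exact h _ hc'

lemma istree_iso (e : Γ ≃g Γ') (h : Γ.IsTree) : Γ'.IsTree :=
  ⟨connected_iso e h.isConnected, acyclic_iso e h.IsAcyclic⟩

lemma evine_iso {k : ℕ} (e : Γ ≃g Γ') (h : IsEvine k Γ) : IsEvine k Γ' :=
  ⟨istree_iso e h.1, (gdiam_iso e).trans h.2⟩

end KCE

namespace KCE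

open SimpleGraph

variable {α β : Type*} {Γ : SimpleGraph α} {Γ' : SimpleGraph β}

/-- Restriction of a graph to a vertex set, keeping the ambient vertex type. -/
def restr (Γ : SimpleGraph α) (W : Set α) : SimpleGraph α where
  Adj x y := Γ.Adj x y ∧ x ∈ W ∧ y ∈ W
  symm := ⟨fun x y ⟨h, hx, hy⟩ => ⟨h.symm, hy, hx⟩⟩
  loopless := ⟨fun x h => Γ.loopless.irrefl x h.1⟩

@[simp] lemma restr_adj {W : Set α} {x y : α} :
    (restr Γ W).Adj x y ↔ Γ.Adj x y ∧ x ∈ W ∧ y ∈ W := Iff.rfl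

lemma restr_le {W : Set α} : restr Γ W ≤ Γ := fun _ _ h => h.1

/-- The ball of radius `k` around the pair `u,v`. -/
def bset (k : ℕ) (Γ : SimpleGraph α) (u v : α) : Set α :=
  {w | Γ.edist u w ≤ (k : ℕ∞) ∨ Γ.edist v w ≤ (k : ℕ∞)}

lemma mem_bset {k : ℕ} {u v w : α} :
    w ∈ bset k Γ u v ↔ Γ.edist u w ≤ (k : ℕ∞) ∨ Γ.edist v w ≤ (k : ℕ∞) := Iff.rfl

/-- `IsKCentralEdge` with the ball condition replaced by an arbitrary vertex set. -/
def CentralIn (k : ℕ) (Γ : SimpleGraph α) (W : Set α) (u v : α) : Prop :=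
  Γ.Adj u v ∧ ∃ (B : Γ.Subgraph) (hu : u ∈ B.verts) (hv : v ∈ B.verts),
    B.verts ⊆ W ∧ IsEvine k B.coe ∧ B.Adj u v ∧
    _root_.eccent B.coe ⟨u, hu⟩ = ((k + 1 : ℕ) : ℕ∞) ∧
    _root_.eccent B.coe ⟨v, hv⟩ = ((k + 1 : ℕ) : ℕ∞)

lemma centralIn_mono {k : ℕ} {W W' : Set α} {u v : α} (h : W ⊆ W')
    (hc : CentralIn k Γ W u v) : CentralIn k Γ W' u v := by
  obtain ⟨hadj, B, hu, hv, hsub, rest⟩ := hc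
  exact ⟨hadj, B, hu, hv, hsub.trans h, rest⟩

lemma le_kEball_iff {G : SimpleGraph α} {u v : α} {k : ℕ} {B : G.Subgraph} :
    B ≤ kEball G u v k ↔ B.verts ⊆ bset k G u v := by
  constructor
  · exact fun h => h.1
  · intro h
    refine ⟨h, fun x y hxy => ⟨h (B.edge_vert hxy), h (B.edge_vert hxy.symm), B.adj_sub hxy⟩⟩

lemma isKCentral_iff_centralIn {G : SimpleGraph α} {u v : α} {k : ℕ} :
    IsKCentralEdge k G u v ↔ CentralIn k G (bset k G u v) u v := by
  unfold IsKCentralEdge CentralIn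
  refine and_congr_right fun _ => ?_
  refine exists_congr fun B => exists_congr fun hu => exists_congr fun hv => ?_
  exact and_congr le_kEball_iff Iff.rfl

/-- Reinterpreting a subgraph between `Γ` and `restr Γ W` (verts inside `W`). -/
lemma centralIn_restr_iff {k : ℕ} {W : Set α} {u v : α} (hu : u ∈ W) (hv : v ∈ W)
    (hadj : Γ.Adj u v) :
    CentralIn k (restr Γ W) W u v ↔ CentralIn k Γ W u v := by
  constructor
  · rintro ⟨-, B, hbu, hbv, hsub, hev, hBadj, hecc1, hecc2⟩
    refine ⟨hadj, ⟨B.verts, B.Adj, fun h => (B.adj_sub h).1, B.edge_vert, B.symm⟩,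
      hbu, hbv, hsub, hev, hBadj, hecc1, hecc2⟩
  · rintro ⟨-, B, hbu, hbv, hsub, hev, hBadj, hecc1, hecc2⟩
    refine ⟨⟨hadj, hu, hv⟩, ⟨B.verts, B.Adj,
      fun h => ⟨B.adj_sub h, hsub (B.edge_vert h), hsub (B.edge_vert (B.adj_symm h))⟩,
      B.edge_vert, B.symm⟩, hbu, hbv, hsub, hev, hBadj, hecc1, hecc2⟩

/-- The coe of a mapped subgraph is isomorphic to the original coe. -/
noncomputable def coeMapIso (e : Γ ≃g Γ') (B : Γ.Subgraph) :
    B.coe ≃g (B.map e.toHom).coe where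
  toEquiv := e.toEquiv.image B.verts
  map_rel_iff' := by
    rintro ⟨a, ha⟩ ⟨b, hb⟩
    show (B.map e.toHom).Adj (e a) (e b) ↔ B.Adj a b
    constructor
    · rintro ⟨x, y, hxy, hx, hy⟩
      have hx' : x = a := e.toEquiv.injective hx
      have hy' : y = b := e.toEquiv.injective hy
      rwa [hx', hy'] at hxy
    · intro h
      exact ⟨a, b, h, rfl, rfl⟩

lemma centralIn_iso_of (e : Γ ≃g Γ') {k : ℕ} {W : Set α} {u v : α}
    (h : CentralIn k Γ W u v) : CentralIn k Γ' (e '' W) (e u) (e v) := by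
  obtain ⟨hadj, B, hu, hv, hsub, hev, hBadj, hecc1, hecc2⟩ := h
  have hu' : e u ∈ (B.map e.toHom).verts := ⟨u, hu, rfl⟩
  have hv' : e v ∈ (B.map e.toHom).verts := ⟨v, hv, rfl⟩
  refine ⟨e.map_adj_iff.mpr hadj, B.map e.toHom, hu', hv', ?_, ?_, ?_, ?_, ?_⟩
  · exact Set.image_mono hsub
  · exact evine_iso (coeMapIso e B) hev
  · exact ⟨u, v, hBadj, rfl, rfl⟩
  · rw [← hecc1, ← eccent_iso (coeMapIso e B) ⟨u, hu⟩]; rfl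
  · rw [← hecc2, ← eccent_iso (coeMapIso e B) ⟨v, hv⟩]; rfl

end KCE

namespace KCE

open SimpleGraph

variable {α : Type*} {Γ : SimpleGraph α}

lemma edist_le_restr {W : Set α} {x y : α} :
    Γ.edist x y ≤ (restr Γ W).edist x y := edist_anti restr_le

lemma edist_restr_le_of_walk {W : Set α} {x y : α} (p : Γ.Walk x y)
    (hp : ∀ z ∈ p.support, z ∈ W) : (restr Γ W).edist x y ≤ (p.length : ℕ∞) := by
  induction p with
  | nil => simp
  | @cons a b c hab q ih =>
    have ha : a ∈ W := hp a (Walk.start_mem_support _)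
    have hb : b ∈ W := hp b (by simp)
    have h1 : (restr Γ W).edist a b ≤ 1 :=
      le_of_eq (edist_eq_one_iff_adj.mpr ⟨hab, ha, hb⟩)
    have h2 : (restr Γ W).edist b c ≤ (q.length : ℕ∞) :=
      ih (fun z hz => hp z (by simp [hz]))
    calc (restr Γ W).edist a c ≤ (restr Γ W).edist a b + (restr Γ W).edist b c :=
          SimpleGraph.edist_triangle
      _ ≤ 1 + (q.length : ℕ∞) := add_le_add h1 h2
      _ = ((q.length + 1 : ℕ) : ℕ∞) := by push_cast; ring
      _ = (((Walk.cons hab q).length : ℕ) : ℕ∞) := by rw [Walk.length_cons]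

lemma exists_geodesic {u x : α} (h : Γ.edist u x ≠ ⊤) :
    ∃ p : Γ.Walk u x, (p.length : ℕ∞) = Γ.edist u x ∧
      ∀ z ∈ p.support, Γ.edist u z ≤ Γ.edist u x := by
  classical
  obtain ⟨p, hp⟩ := exists_walk_of_edist_ne_top h
  refine ⟨p, hp, fun z hz => ?_⟩
  calc Γ.edist u z ≤ ((p.takeUntil z hz).length : ℕ∞) := edist_le _
    _ ≤ (p.length : ℕ∞) := by
        exact_mod_cast Nat.cast_le.mpr (Walk.length_takeUntil_le p hz)
    _ = Γ.edist u x := hp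

lemma edist_restr_eq_of_closed {W : Set α} {c x : α} (hcx : Γ.edist c x ≠ ⊤)
    (hW : ∀ z, Γ.edist c z ≤ Γ.edist c x → z ∈ W) :
    (restr Γ W).edist c x = Γ.edist c x := by
  obtain ⟨p, hlen, hsup⟩ := exists_geodesic hcx
  refine le_antisymm ?_ edist_le_restr
  calc (restr Γ W).edist c x ≤ (p.length : ℕ∞) :=
        edist_restr_le_of_walk p (fun z hz => hW z (hsup z hz))
    _ = Γ.edist c x := hlen

/-- ball-likeness of `W` relative to marked vertices. -/
def Blike (k : ℕ) (Γ : SimpleGraph α) (W : Set α) (u v : α) : Prop :=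
  ∀ w ∈ W, (restr Γ W).edist u w ≤ (k : ℕ∞) ∨ (restr Γ W).edist v w ≤ (k : ℕ∞)

/-- the inner part of `W`. -/
def iset (k : ℕ) (Γ : SimpleGraph α) (W : Set α) (u v : α) : Set α :=
  {w | w ∈ W ∧ ((restr Γ W).edist u w ≤ ((k - 1 : ℕ) : ℕ∞) ∨
      (restr Γ W).edist v w ≤ ((k - 1 : ℕ) : ℕ∞))}

/-- outside neighbours of the inner part. -/
def bdry (k : ℕ) (Γ : SimpleGraph α) (W : Set α) (u v : α) : Set α :=
  {x | x ∉ W ∧ ∃ w ∈ iset k Γ W u v, Γ.Adj w x}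

def Good (k : ℕ) (Γ : SimpleGraph α) (W : Set α) (u v : α) : Prop :=
  Γ.Adj u v ∧ u ∈ W ∧ v ∈ W ∧ Blike k Γ W u v ∧ CentralIn k Γ W u v

lemma coe_sub_one_add_one {k : ℕ} (hk : 1 ≤ k) :
    ((k - 1 : ℕ) : ℕ∞) + 1 = (k : ℕ∞) := by
  have h : ((k - 1 + 1 : ℕ) : ℕ∞) = (k : ℕ∞) := by rw [Nat.sub_add_cancel hk]
  exact_mod_cast h

/-- T1: a `k`-central edge gives a good triple with empty boundary at its ball. -/
lemma central_good {k : ℕ} (hk : 1 ≤ k) {u v : α} (h : IsKCentralEdge k Γ u v) :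
    Good k Γ (bset k Γ u v) u v ∧ bdry k Γ (bset k Γ u v) u v = ∅ := by
  have hadj : Γ.Adj u v := h.1
  have huW : u ∈ bset k Γ u v := Or.inl (by simp)
  have hvW : v ∈ bset k Γ u v := Or.inr (by simp)
  have agreeu : ∀ x, Γ.edist u x ≤ (k : ℕ∞) →
      (restr Γ (bset k Γ u v)).edist u x = Γ.edist u x := by
    intro x hx
    refine edist_restr_eq_of_closed (by intro ht; rw [ht] at hx; simp at hx) ?_
    intro z hz
    exact Or.inl (hz.trans hx)
  have agreev : ∀ x, Γ.edist v x ≤ (k : ℕ∞) →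
      (restr Γ (bset k Γ u v)).edist v x = Γ.edist v x := by
    intro x hx
    refine edist_restr_eq_of_closed (by intro ht; rw [ht] at hx; simp at hx) ?_
    intro z hz
    exact Or.inr (hz.trans hx)
  constructor
  · refine ⟨hadj, huW, hvW, ?_, isKCentral_iff_centralIn.mp h⟩
    intro w hw
    rcases hw with hw | hw
    · exact Or.inl (le_of_le_of_eq (le_of_eq (agreeu w hw)) rfl |>.trans hw)
    · exact Or.inr (le_of_le_of_eq (le_of_eq (agreev w hw)) rfl |>.trans hw)
  · ext x
    simp only [bdry, Set.mem_setOf_eq, Set.mem_empty_iff_false, iff_false, not_and]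
    intro hxW
    rintro ⟨w, ⟨hwW, hw⟩, hadj'⟩
    apply hxW
    have hax : Γ.edist w x ≤ 1 := le_of_eq (edist_eq_one_iff_adj.mpr hadj')
    rcases hw with hw | hw
    · have h1 : Γ.edist u w ≤ ((k - 1 : ℕ) : ℕ∞) := le_trans edist_le_restr hw
      exact Or.inl (by
        calc Γ.edist u x ≤ Γ.edist u w + Γ.edist w x := SimpleGraph.edist_triangle
          _ ≤ ((k - 1 : ℕ) : ℕ∞) + 1 := add_le_add h1 hax
          _ = (k : ℕ∞) := coe_sub_one_add_one hk)
    · have h1 : Γ.edist v w ≤ ((k - 1 : ℕ) : ℕ∞) := le_trans edist_le_restr hw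
      exact Or.inr (by
        calc Γ.edist v x ≤ Γ.edist v w + Γ.edist w x := SimpleGraph.edist_triangle
          _ ≤ ((k - 1 : ℕ) : ℕ∞) + 1 := add_le_add h1 hax
          _ = (k : ℕ∞) := coe_sub_one_add_one hk)

end KCE

namespace KCE

open SimpleGraph

variable {α : Type*} {Γ : SimpleGraph α}

lemma exists_pred {u x : α} {j : ℕ} (h : Γ.edist u x = ((j + 1 : ℕ) : ℕ∞)) :
    ∃ y, Γ.Adj y x ∧ Γ.edist u y = (j : ℕ∞) := by
  obtain ⟨p, hp⟩ := exists_walk_of_edist_eq_coe h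
  -- p : Γ.Walk u x, p.length = j + 1
  cases hr : p.reverse with
  | nil =>
      exfalso
      have := congrArg Walk.length hr
      simp [hp] at this
  | @cons _ y _ hadj q =>
      -- hadj : Γ.Adj x y, q : Γ.Walk y u
      have hlen : q.length = j := by
        have := congrArg Walk.length hr
        simp [hp] at this
        omega
      refine ⟨y, hadj.symm, le_antisymm ?_ ?_⟩
      · calc Γ.edist u y ≤ (q.reverse.length : ℕ∞) := edist_le _
          _ = (j : ℕ∞) := by rw [Walk.length_reverse, hlen]
      · by_contra hlt
        push_neg at hlt
        have h1 : Γ.edist u x ≤ Γ.edist u y + 1 := by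
          calc Γ.edist u x ≤ Γ.edist u y + Γ.edist y x := SimpleGraph.edist_triangle
            _ ≤ Γ.edist u y + 1 := by
                exact add_le_add le_rfl (le_of_eq (edist_eq_one_iff_adj.mpr hadj.symm))
        rw [h] at h1
        -- Γ.edist u y < j  and  j + 1 ≤ edist u y + 1
        have h2 : (j : ℕ∞) ≤ Γ.edist u y := by
          by_contra h3
          push_neg at h3
          have h4 : Γ.edist u y + 1 ≤ (j : ℕ∞) := Order.add_one_le_of_lt h3
          have h5 : ((j + 1 : ℕ) : ℕ∞) ≤ (j : ℕ∞) := le_trans h1 h4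
          have : ((j : ℕ) : ℕ∞) < ((j + 1 : ℕ) : ℕ∞) := by
            exact_mod_cast Nat.lt_succ_self j
          exact absurd (lt_of_lt_of_le this h5) (lt_irrefl _)
        exact absurd h2 (not_le_of_gt hlt)

/-- T2 step: inward induction showing the ball is inside `W`. -/
lemma ball_subset_of_good {k : ℕ} (hk : 1 ≤ k) {W : Set α} {u v c : α}
    (hcW : c ∈ W)
    (hbd : bdry k Γ W u v = ∅)
    (hin : ∀ w, w ∈ W → (restr Γ W).edist c w ≤ ((k - 1 : ℕ) : ℕ∞) →
      w ∈ iset k Γ W u v) :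
    ∀ j : ℕ, j ≤ k → ∀ x, Γ.edist c x = (j : ℕ∞) →
      x ∈ W ∧ (restr Γ W).edist c x ≤ (j : ℕ∞) := by
  intro j
  induction j with
  | zero =>
      intro _ x hx
      have : c = x := by simpa using hx
      subst this
      simp [hcW]
  | succ j ih =>
      intro hjk x hx
      obtain ⟨y, hyx, hy⟩ := exists_pred hx
      obtain ⟨hyW, hyd⟩ := ih (le_trans (Nat.le_succ j) hjk) y hy
      have hyi : y ∈ iset k Γ W u v := by
        refine hin y hyW (le_trans hyd ?_)
        exact_mod_cast Nat.le_sub_one_of_lt (Nat.lt_of_lt_of_le (Nat.lt_succ_self j) hjk)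
      have hxW : x ∈ W := by
        by_contra hxW
        have : x ∈ bdry k Γ W u v := ⟨hxW, y, hyi, hyx⟩
        rw [hbd] at this
        exact this
      refine ⟨hxW, ?_⟩
      calc (restr Γ W).edist c x ≤ (restr Γ W).edist c y + (restr Γ W).edist y x :=
            SimpleGraph.edist_triangle
        _ ≤ (j : ℕ∞) + 1 :=
            add_le_add hyd (le_of_eq (edist_eq_one_iff_adj.mpr ⟨hyx, hyW, hxW⟩))
        _ = ((j + 1 : ℕ) : ℕ∞) := by push_cast; ring

/-- T2: good triple with empty boundary pins down the ball and centrality. -/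
lemma good_unique {k : ℕ} (hk : 1 ≤ k) {W : Set α} {u v : α}
    (hG : Good k Γ W u v) (hb : bdry k Γ W u v = ∅) :
    W = bset k Γ u v ∧ IsKCentralEdge k Γ u v := by
  obtain ⟨hadj, huW, hvW, hbl, hcen⟩ := hG
  have hWb : W ⊆ bset k Γ u v := by
    intro w hw
    rcases hbl w hw with h | h
    · exact Or.inl (le_trans edist_le_restr h)
    · exact Or.inr (le_trans edist_le_restr h)
  have hinu : ∀ w, w ∈ W → (restr Γ W).edist u w ≤ ((k - 1 : ℕ) : ℕ∞) →
      w ∈ iset k Γ W u v := fun w hw hd => ⟨hw, Or.inl hd⟩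
  have hinv : ∀ w, w ∈ W → (restr Γ W).edist v w ≤ ((k - 1 : ℕ) : ℕ∞) →
      w ∈ iset k Γ W u v := fun w hw hd => ⟨hw, Or.inr hd⟩
  have hbW : bset k Γ u v ⊆ W := by
    intro x hx
    rcases hx with hx | hx
    · have hnt : Γ.edist u x ≠ ⊤ := by
        intro ht; rw [ht] at hx; simp at hx
      obtain ⟨j, hj⟩ := WithTop.ne_top_iff_exists.mp hnt
      have hjk : j ≤ k := by
        rw [← hj] at hx
        exact Nat.cast_le.mp (show ((j : ℕ) : ℕ∞) ≤ (k : ℕ∞) from hx)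
      exact (ball_subset_of_good hk huW hb hinu j hjk x hj.symm).1
    · have hnt : Γ.edist v x ≠ ⊤ := by
        intro ht; rw [ht] at hx; simp at hx
      obtain ⟨j, hj⟩ := WithTop.ne_top_iff_exists.mp hnt
      have hjk : j ≤ k := by
        rw [← hj] at hx
        exact Nat.cast_le.mp (show ((j : ℕ) : ℕ∞) ≤ (k : ℕ∞) from hx)
      exact (ball_subset_of_good hk hvW hb hinv j hjk x hj.symm).1
  have hWeq : W = bset k Γ u v := le_antisymm hWb hbW
  refine ⟨hWeq, ?_⟩
  rw [isKCentral_iff_centralIn, ← hWeq]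
  exact hcen

end KCE

namespace KCE

open SimpleGraph Finset

variable {α : Type*} {Γ : SimpleGraph α}

lemma edist_split_of_mem_support {x y z : α} [DecidableEq α] (p : Γ.Walk x y)
    (hz : z ∈ p.support) :
    Γ.edist x z + Γ.edist z y ≤ (p.length : ℕ∞) := by
  have hspec := congrArg Walk.length (p.take_spec hz)
  rw [Walk.length_append] at hspec
  calc Γ.edist x z + Γ.edist z y
      ≤ ((p.takeUntil z hz).length : ℕ∞) + ((p.dropUntil z hz).length : ℕ∞) :=
        add_le_add (edist_le _) (edist_le _)
    _ = (p.length : ℕ∞) := by exact_mod_cast congrArg (Nat.cast : ℕ → ℕ∞) hspec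

lemma exists_initial_seg {β : Type*} [Fintype β] [DecidableEq β] (ρ : β → ℕ∞) (c : ℕ∞) :
    ∀ m : ℕ, m ≤ (Finset.univ.filter (fun x => ρ x ≤ c)).card →
    ∃ s : Finset β, s.card = m ∧ (∀ x ∈ s, ρ x ≤ c) ∧
      (∀ x ∈ s, ∀ y, y ∉ s → ρ x ≤ ρ y) := by
  intro m
  induction m with
  | zero => intro _; exact ⟨∅, rfl, by simp, by simp⟩
  | succ m ih =>
    intro hm
    obtain ⟨s, hcard, hle, hinit⟩ := ih (le_trans (Nat.le_succ m) hm)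
    have hssub : s ⊆ Finset.univ.filter (fun x => ρ x ≤ c) := by
      intro x hx; simpa using hle x hx
    have hne : ((Finset.univ.filter (fun x => ρ x ≤ c)) \ s).Nonempty := by
      rw [← Finset.card_pos, Finset.card_sdiff_of_subset hssub, hcard]
      omega
    obtain ⟨a, ha⟩ := hne
    have ha' : a ∉ s := (Finset.mem_sdiff.mp ha).2
    have haA : ρ a ≤ c := by
      have := (Finset.mem_sdiff.mp ha).1; simpa using this
    have hne2 : (Finset.univ \ s).Nonempty := ⟨a, by simp [ha']⟩
    obtain ⟨x₀, hx₀mem, hx₀min⟩ := Finset.exists_min_image (Finset.univ \ s) ρ hne2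
    have hx₀notin : x₀ ∉ s := (Finset.mem_sdiff.mp hx₀mem).2
    have hx₀le : ρ x₀ ≤ c := le_trans (hx₀min a (by simp [ha'])) haA
    refine ⟨insert x₀ s, ?_, ?_, ?_⟩
    · rw [Finset.card_insert_of_notMem hx₀notin, hcard]
    · intro x hx
      rcases Finset.mem_insert.mp hx with rfl | hx
      · exact hx₀le
      · exact hle x hx
    · intro x hx y hy
      have hy' : y ∉ s := fun h => hy (Finset.mem_insert_of_mem h)
      rcases Finset.mem_insert.mp hx with rfl | hx
      · exact hx₀min y (by simp [hy'])
      · exact hinit x hx y hy'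

lemma edist_induce_le_of_walk {s : Set α} {x y : α} (p : Γ.Walk x y)
    (hp : ∀ z ∈ p.support, z ∈ s) (hx : x ∈ s) (hy : y ∈ s) :
    (Γ.induce s).edist ⟨x, hx⟩ ⟨y, hy⟩ ≤ (p.length : ℕ∞) := by
  induction p with
  | nil => simp
  | @cons a b c hab q ih =>
    have hb : b ∈ s := hp b (by simp)
    have h1 : (Γ.induce s).edist ⟨a, hx⟩ ⟨b, hb⟩ ≤ 1 := by
      refine le_of_eq (edist_eq_one_iff_adj.mpr ?_)
      exact hab
    have h2 : (Γ.induce s).edist ⟨b, hb⟩ ⟨c, hy⟩ ≤ (q.length : ℕ∞) :=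
      ih (fun z hz => hp z (by simp [hz])) hb hy
    calc (Γ.induce s).edist ⟨a, hx⟩ ⟨c, hy⟩
        ≤ (Γ.induce s).edist ⟨a, hx⟩ ⟨b, hb⟩ + (Γ.induce s).edist ⟨b, hb⟩ ⟨c, hy⟩ :=
          SimpleGraph.edist_triangle
      _ ≤ 1 + (q.length : ℕ∞) := add_le_add h1 h2
      _ = (((Walk.cons hab q).length : ℕ) : ℕ∞) := by
          rw [Walk.length_cons]; push_cast; ring

end KCE

namespace KCE

open SimpleGraph Finset

open scoped Classical

lemma ball_small {n : ℕ} {G : SimpleGraph (Fin n)} {k m : ℕ} (hk : 1 ≤ k) (hm : 2*k+2 ≤ m)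
    (hcards : ∀ s : Finset (Fin n), s.card = m →
      (SimpleGraph.induce (↑s : Set (Fin n)) G).IsAcyclic ∧
      (k : ℕ∞) < gradius (SimpleGraph.induce (↑s : Set (Fin n)) G) ∧
      gdiam (SimpleGraph.induce (↑s : Set (Fin n)) G) ≠ ((2 * k + 1 : ℕ) : ℕ∞))
    {u v : Fin n} (huv : G.Adj u v) :
    (Finset.univ.filter (fun x => x ∈ bset k G u v)).card ≤ m := by
  by_contra hbig
  push_neg at hbig
  set ρ : Fin n → ℕ∞ := fun x => min (G.edist u x) (G.edist v x) with hρ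
  have hmemb : ∀ x : Fin n, x ∈ bset k G u v ↔ ρ x ≤ (k : ℕ∞) := by
    intro x
    rw [mem_bset, hρ]
    exact (min_le_iff).symm
  have hfeq : (Finset.univ.filter (fun x => x ∈ bset k G u v))
      = (Finset.univ.filter (fun x => ρ x ≤ (k : ℕ∞))) := by
    apply Finset.filter_congr
    intro x _
    simp [hmemb x]
  have key : m ≤ (Finset.univ.filter (fun x => ρ x ≤ (k : ℕ∞))).card :=
    le_of_lt (hfeq ▸ hbig)
  obtain ⟨s, hcard, hles, hinit⟩ := exists_initial_seg ρ (k : ℕ∞) m key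
  -- u and v belong to s
  have hρu : ρ u = 0 := by
    rw [hρ]
    simp
  have hρv : ρ v = 0 := by
    rw [hρ]
    simp
  have hzero : ∀ x, ρ x = 0 → x = u ∨ x = v := by
    intro x hx
    have hx' : min (G.edist u x) (G.edist v x) = 0 := hx
    rcases le_total (G.edist u x) (G.edist v x) with h | h
    · rw [min_eq_left h] at hx'
      exact Or.inl (edist_eq_zero_iff.mp hx').symm
    · rw [min_eq_right h] at hx'
      exact Or.inr (edist_eq_zero_iff.mp hx').symm
  have hbigm : 4 ≤ m := by omega
  have hus : u ∈ s := by
    by_contra hu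
    have hsub : s ⊆ {u, v} := by
      intro x hx
      have h1 := hinit x hx u hu
      rw [hρu] at h1
      have h2 : ρ x = 0 := le_antisymm h1 zero_le
      rcases hzero x h2 with rfl | rfl <;> simp
    have : s.card ≤ 2 := le_trans (Finset.card_le_card hsub)
      (le_trans (Finset.card_insert_le _ _) (by simp))
    omega
  have hvs : v ∈ s := by
    by_contra hv
    have hsub : s ⊆ {u, v} := by
      intro x hx
      have h1 := hinit x hx v hv
      rw [hρv] at h1
      have h2 : ρ x = 0 := le_antisymm h1 zero_le
      rcases hzero x h2 with rfl | rfl <;> simp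
    have : s.card ≤ 2 := le_trans (Finset.card_le_card hsub)
      (le_trans (Finset.card_insert_le _ _) (by simp))
    omega
  obtain ⟨hacy, hrad, hdiam⟩ := hcards s hcard
  set C := SimpleGraph.induce (↑s : Set (Fin n)) G with hC
  have husS : u ∈ (↑s : Set (Fin n)) := Finset.mem_coe.mpr hus
  have hvsS : v ∈ (↑s : Set (Fin n)) := Finset.mem_coe.mpr hvs
  set cu : ↥(↑s : Set (Fin n)) := ⟨u, husS⟩ with hcu
  set cv : ↥(↑s : Set (Fin n)) := ⟨v, hvsS⟩ with hcv
  have hCadj : C.Adj cu cv := huv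
  -- distances within the card
  have side : ∀ (c : Fin n) (hcs : c ∈ s), (∀ z, ρ z ≤ G.edist c z) →
      ∀ (x : Fin n) (hx : x ∈ s), G.edist c x = ρ x →
      C.edist ⟨c, Finset.mem_coe.mpr hcs⟩ ⟨x, Finset.mem_coe.mpr hx⟩ ≤ (k : ℕ∞) := by
    intro c hcs hcz x hx heq
    have hρx : ρ x ≤ (k : ℕ∞) := hles x hx
    have hne : G.edist c x ≠ ⊤ := by
      intro ht
      rw [heq] at ht
      rw [ht] at hρx
      simp at hρx
    obtain ⟨p, hplen, hpsup⟩ := exists_geodesic hne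
    have hsubs : ∀ z ∈ p.support, z ∈ (↑s : Set (Fin n)) := by
      intro z hz
      by_cases hzx : z = x
      · subst hzx; exact Finset.mem_coe.mpr hx
      · by_contra hzs
        have hznotin : z ∉ s := fun h => hzs (Finset.mem_coe.mpr h)
        have hge := hinit x hx z hznotin
        -- show ρ z < ρ x for contradiction
        have hsplit := edist_split_of_mem_support p hz
        have hone : (1 : ℕ∞) ≤ G.edist z x := by
          have hposne : G.edist z x ≠ 0 := by
            rw [Ne, edist_eq_zero_iff]
            exact hzx
          exact ENat.one_le_iff_ne_zero.mpr hposne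
        have h2 : G.edist c z + 1 ≤ G.edist c x := by
          calc G.edist c z + 1 ≤ G.edist c z + G.edist z x := add_le_add le_rfl hone
            _ ≤ (p.length : ℕ∞) := hsplit
            _ = G.edist c x := hplen
        have hznetop : G.edist c z ≠ ⊤ := by
          intro ht
          rw [ht] at h2
          rw [heq] at h2
          have : ρ x = ⊤ := top_le_iff.mp (le_trans (by simp) h2)
          rw [this] at hρx
          simp at hρx
        have h4 : G.edist c z < G.edist c z + 1 :=
          (ENat.lt_add_one_iff hznetop).mpr le_rfl
        have hlt : G.edist c z < G.edist c x := lt_of_lt_of_le h4 h2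
        have : ρ z < ρ x := lt_of_le_of_lt (hcz z) (heq ▸ hlt)
        exact absurd hge (not_le_of_gt this)
    calc C.edist ⟨c, Finset.mem_coe.mpr hcs⟩ ⟨x, Finset.mem_coe.mpr hx⟩
        ≤ (p.length : ℕ∞) := edist_induce_le_of_walk p hsubs _ _
      _ = G.edist c x := hplen
      _ = ρ x := heq
      _ ≤ (k : ℕ∞) := hρx
  have key6 : ∀ a : ↥(↑s : Set (Fin n)),
      C.edist cu a ≤ (k : ℕ∞) ∨ C.edist cv a ≤ (k : ℕ∞) := by
    rintro ⟨x, hxS⟩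
    have hx : x ∈ s := Finset.mem_coe.mp hxS
    rcases le_total (G.edist u x) (G.edist v x) with h | h
    · exact Or.inl (side u hus (fun z => min_le_left _ _) x hx (min_eq_left h).symm)
    · exact Or.inr (side v hvs (fun z => min_le_right _ _) x hx (min_eq_right h).symm)
  -- far vertices
  have hradu : (k : ℕ∞) < _root_.eccent C cu := by
    unfold gradius at hrad
    exact lt_of_lt_of_le hrad (iInf_le _ cu)
  have hradv : (k : ℕ∞) < _root_.eccent C cv := by
    unfold gradius at hrad
    exact lt_of_lt_of_le hrad (iInf_le _ cv)
  obtain ⟨xu, hxu⟩ : ∃ a, (k : ℕ∞) < C.edist cu a := by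
    unfold _root_.eccent at hradu
    exact lt_iSup_iff.mp hradu
  obtain ⟨xv, hxv⟩ : ∃ a, (k : ℕ∞) < C.edist cv a := by
    unfold _root_.eccent at hradv
    exact lt_iSup_iff.mp hradv
  have h1 : C.edist cu cv = 1 := edist_eq_one_iff_adj.mpr hCadj
  have h1' : C.edist cv cu = 1 := by rw [SimpleGraph.edist_comm]; exact h1
  have hcastk1 : ((k + 1 : ℕ) : ℕ∞) = (k : ℕ∞) + 1 := by push_cast; ring
  -- C.edist cv xu ≤ k
  have hdvxu : C.edist cv xu ≤ (k : ℕ∞) := by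
    rcases key6 xu with h | h
    · exact absurd h (not_le_of_gt hxu)
    · exact h
  have hduxv : C.edist cu xv ≤ (k : ℕ∞) := by
    rcases key6 xv with h | h
    · exact h
    · exact absurd h (not_le_of_gt hxv)
  have hduxu : C.edist cu xu = (k : ℕ∞) + 1 := by
    refine le_antisymm ?_ (Order.add_one_le_of_lt hxu)
    calc C.edist cu xu ≤ C.edist cu cv + C.edist cv xu := SimpleGraph.edist_triangle
      _ ≤ 1 + (k : ℕ∞) := add_le_add (le_of_eq h1) hdvxu
      _ = (k : ℕ∞) + 1 := by rw [add_comm]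
  have hdvxv : C.edist cv xv = (k : ℕ∞) + 1 := by
    refine le_antisymm ?_ (Order.add_one_le_of_lt hxv)
    calc C.edist cv xv ≤ C.edist cv cu + C.edist cu xv := SimpleGraph.edist_triangle
      _ ≤ 1 + (k : ℕ∞) := add_le_add (le_of_eq h1') hduxv
      _ = (k : ℕ∞) + 1 := by rw [add_comm]
  have hkxv : (k : ℕ∞) ≤ C.edist cu xv := by
    by_contra hlt
    push_neg at hlt
    have h2 : C.edist cu xv + 1 ≤ (k : ℕ∞) := Order.add_one_le_of_lt hlt
    have h3 : C.edist cv xv ≤ (k : ℕ∞) := by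
      calc C.edist cv xv ≤ C.edist cv cu + C.edist cu xv := SimpleGraph.edist_triangle
        _ = C.edist cu xv + 1 := by rw [h1', add_comm]
        _ ≤ (k : ℕ∞) := h2
    rw [hdvxv] at h3
    have hlt1 : (k : ℕ∞) < (k : ℕ∞) + 1 :=
      (ENat.lt_add_one_iff (ENat.coe_ne_top k)).mpr le_rfl
    exact absurd (lt_of_lt_of_le hlt1 h3) (lt_irrefl _)
  -- geodesics avoiding the other center
  have hnevxu : C.edist cv xu ≠ ⊤ := by
    intro ht; rw [ht] at hdvxu; simp at hdvxu
  have hneuxv : C.edist cu xv ≠ ⊤ := by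
    intro ht; rw [ht] at hduxv; simp at hduxv
  obtain ⟨q1, hq1len⟩ := exists_walk_of_edist_ne_top hnevxu
  obtain ⟨q2, hq2len⟩ := exists_walk_of_edist_ne_top hneuxv
  have hq1u : cu ∉ q1.support := by
    intro hmem
    have := edist_split_of_mem_support q1 hmem
    rw [hq1len] at this
    have h2 : C.edist cv cu + C.edist cu xu ≤ (k : ℕ∞) :=
      le_trans this hdvxu
    rw [h1', hduxu] at h2
    -- 1 + (k+1) ≤ k : contradiction
    have h3 : (k : ℕ∞) + 1 ≤ (k : ℕ∞) := le_trans (by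
      calc (k : ℕ∞) + 1 ≤ 1 + ((k : ℕ∞) + 1) := le_add_self
        _ = 1 + ((k : ℕ∞) + 1) := rfl) h2
    exact absurd h3 (by
      simp only [not_le]
      exact (ENat.lt_add_one_iff (ENat.coe_ne_top k)).mpr le_rfl)
  have hq2v : cv ∉ q2.support := by
    intro hmem
    have := edist_split_of_mem_support q2 hmem
    rw [hq2len] at this
    have h2 : C.edist cu cv + C.edist cv xv ≤ (k : ℕ∞) :=
      le_trans this hduxv
    rw [h1, hdvxv] at h2
    have h3 : (k : ℕ∞) + 1 ≤ (k : ℕ∞) := le_trans (by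
      calc (k : ℕ∞) + 1 ≤ 1 + ((k : ℕ∞) + 1) := le_add_self
        _ = 1 + ((k : ℕ∞) + 1) := rfl) h2
    exact absurd h3 (by
      simp only [not_le]
      exact (ENat.lt_add_one_iff (ENat.coe_ne_top k)).mpr le_rfl)
  -- lower bound for walks xu → xv
  have hlow : ∀ p : C.Walk xu xv, ((2 * k + 1 : ℕ) : ℕ∞) ≤ (p.length : ℕ∞) := by
    intro p
    by_cases hu : cu ∈ p.support
    · have hsplit := edist_split_of_mem_support p hu
      have h2 : C.edist xu cu = (k : ℕ∞) + 1 := by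
        rw [SimpleGraph.edist_comm]; exact hduxu
      calc ((2 * k + 1 : ℕ) : ℕ∞) = ((k : ℕ∞) + 1) + (k : ℕ∞) := by push_cast; ring
        _ ≤ C.edist xu cu + C.edist cu xv := add_le_add (le_of_eq h2.symm) hkxv
        _ ≤ (p.length : ℕ∞) := hsplit
    · exfalso
      have he1 : s(cu, cv) ∉ p.edges := fun h => hu (p.fst_mem_support_of_mem_edges h)
      have he2 : s(cu, cv) ∉ q1.edges := fun h => hq1u (q1.fst_mem_support_of_mem_edges h)
      have he3 : s(cu, cv) ∉ q2.edges := fun h => hq2v (q2.snd_mem_support_of_mem_edges h)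
      set W : C.Walk cu cv := q2.append (p.reverse.append q1.reverse) with hW
      have hWe : s(cu, cv) ∉ W.edges := by
        rw [hW]
        intro hmem
        rw [Walk.edges_append, List.mem_append] at hmem
        rcases hmem with hmem | hmem
        · exact he3 hmem
        · rw [Walk.edges_append, List.mem_append] at hmem
          rcases hmem with hmem | hmem
          · rw [Walk.edges_reverse, List.mem_reverse] at hmem
            exact he1 hmem
          · rw [Walk.edges_reverse, List.mem_reverse] at hmem
            exact he2 hmem
      have hreach : (C \ fromEdgeSet {s(cu, cv)}).Reachable cu cv :=
        reachable_delete_edges_iff_exists_walk.mpr ⟨W, hWe⟩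
      have hbridge : C.IsBridge s(cu, cv) :=
        isAcyclic_iff_forall_adj_isBridge.mp hacy hCadj
      exact isBridge_iff.mp hbridge hreach
  have hlowd : ((2 * k + 1 : ℕ) : ℕ∞) ≤ C.edist xu xv := le_iInf hlow
  -- upper bound on all distances
  have hub : ∀ a b : ↥(↑s : Set (Fin n)), C.edist a b ≤ ((2 * k + 1 : ℕ) : ℕ∞) := by
    intro a b
    have hca : ∀ c : ↥(↑s : Set (Fin n)), C.edist a c = C.edist c a := fun c => edist_comm
    rcases key6 a with ha | ha <;> rcases key6 b with hb | hb
    · calc C.edist a b ≤ C.edist a cu + C.edist cu b := SimpleGraph.edist_triangle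
        _ ≤ (k : ℕ∞) + (k : ℕ∞) := add_le_add (by rw [SimpleGraph.edist_comm]; exact ha) hb
        _ ≤ ((2 * k + 1 : ℕ) : ℕ∞) := by
            rw [show ((2 * k + 1 : ℕ) : ℕ∞) = (k : ℕ∞) + (k : ℕ∞) + 1 by push_cast; ring]
            exact le_self_add
    · calc C.edist a b ≤ C.edist a cu + (C.edist cu cv + C.edist cv b) :=
            le_trans SimpleGraph.edist_triangle
              (add_le_add le_rfl SimpleGraph.edist_triangle)
        _ ≤ (k : ℕ∞) + (1 + (k : ℕ∞)) := by
            refine add_le_add (by rw [SimpleGraph.edist_comm]; exact ha) (add_le_add (le_of_eq h1) hb)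
        _ = ((2 * k + 1 : ℕ) : ℕ∞) := by push_cast; ring
    · calc C.edist a b ≤ C.edist a cv + (C.edist cv cu + C.edist cu b) :=
            le_trans SimpleGraph.edist_triangle
              (add_le_add le_rfl SimpleGraph.edist_triangle)
        _ ≤ (k : ℕ∞) + (1 + (k : ℕ∞)) := by
            refine add_le_add (by rw [SimpleGraph.edist_comm]; exact ha) (add_le_add (le_of_eq h1') hb)
        _ = ((2 * k + 1 : ℕ) : ℕ∞) := by push_cast; ring
    · calc C.edist a b ≤ C.edist a cv + C.edist cv b := SimpleGraph.edist_triangle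
        _ ≤ (k : ℕ∞) + (k : ℕ∞) := add_le_add (by rw [SimpleGraph.edist_comm]; exact ha) hb
        _ ≤ ((2 * k + 1 : ℕ) : ℕ∞) := by
            rw [show ((2 * k + 1 : ℕ) : ℕ∞) = (k : ℕ∞) + (k : ℕ∞) + 1 by push_cast; ring]
            exact le_self_add
  have hgd : gdiam C = ((2 * k + 1 : ℕ) : ℕ∞) := by
    unfold gdiam
    refine le_antisymm (iSup_le fun a => iSup_le fun b => hub a b) ?_
    calc ((2 * k + 1 : ℕ) : ℕ∞) ≤ C.edist xu xv := hlowd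
      _ ≤ ⨆ b, C.edist xu b := le_iSup _ xv
      _ ≤ ⨆ a, ⨆ b, C.edist a b := le_iSup (fun a => ⨆ b, C.edist a b) xu
  exact hdiam hgd

end KCE

namespace KCE

open SimpleGraph Finset

variable {α : Type*} {Γ : SimpleGraph α}

lemma good_subset_bset {k : ℕ} {W : Set α} {u v : α} (hG : Good k Γ W u v) :
    W ⊆ bset k Γ u v := by
  intro w hw
  rcases hG.2.2.2.1 w hw with h | h
  · exact Or.inl (le_trans edist_le_restr h)
  · exact Or.inr (le_trans edist_le_restr h)

lemma bdry_subset_bset {k : ℕ} (hk : 1 ≤ k) {W : Set α} {u v : α} :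
    bdry k Γ W u v ⊆ bset k Γ u v := by
  rintro x ⟨hxW, w, ⟨hwW, hw⟩, hadj⟩
  have hax : Γ.edist w x ≤ 1 := le_of_eq (edist_eq_one_iff_adj.mpr hadj)
  rcases hw with hw | hw
  · have h1 : Γ.edist u w ≤ ((k - 1 : ℕ) : ℕ∞) := le_trans edist_le_restr hw
    refine Or.inl ?_
    calc Γ.edist u x ≤ Γ.edist u w + Γ.edist w x := SimpleGraph.edist_triangle
      _ ≤ ((k - 1 : ℕ) : ℕ∞) + 1 := add_le_add h1 hax
      _ = (k : ℕ∞) := coe_sub_one_add_one hk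
  · have h1 : Γ.edist v w ≤ ((k - 1 : ℕ) : ℕ∞) := le_trans edist_le_restr hw
    refine Or.inr ?_
    calc Γ.edist v x ≤ Γ.edist v w + Γ.edist w x := SimpleGraph.edist_triangle
      _ ≤ ((k - 1 : ℕ) : ℕ∞) + 1 := add_le_add h1 hax
      _ = (k : ℕ∞) := coe_sub_one_add_one hk

lemma kEball_symm {G : SimpleGraph α} {u v : α} {k : ℕ} :
    kEball G u v k = kEball G v u k := by
  unfold kEball
  have : {w | G.edist u w ≤ (k : ℕ∞) ∨ G.edist v w ≤ (k : ℕ∞)}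
      = {w | G.edist v w ≤ (k : ℕ∞) ∨ G.edist u w ≤ (k : ℕ∞)} := by
    ext w; exact or_comm
  rw [this]

lemma isKCentral_symm {G : SimpleGraph α} {u v : α} {k : ℕ}
    (h : IsKCentralEdge k G u v) : IsKCentralEdge k G v u := by
  obtain ⟨hadj, B, hu, hv, hle, hev, hBadj, h1, h2⟩ := h
  exact ⟨hadj.symm, B, hv, hu, kEball_symm ▸ hle, hev, B.adj_symm hBadj, h2, h1⟩

lemma card_supersets {n j m : ℕ} (A : Finset (Fin n)) (hA : A.card = j) (hjm : j ≤ m) :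
    (((Finset.univ : Finset (Fin n)).powersetCard m).filter (fun s => A ⊆ s)).card
      = (n - j).choose (m - j) := by
  classical
  have hbij : (((Finset.univ : Finset (Fin n)).powersetCard m).filter (fun s => A ⊆ s)).card
      = ((Finset.univ \ A).powersetCard (m - j)).card := by
    apply Finset.card_nbij' (i := fun s => s \ A) (j := fun t => t ∪ A)
    · intro s hs
      simp only [Finset.mem_coe, Finset.mem_filter, Finset.mem_powersetCard] at hs
      obtain ⟨⟨hsub, hcard⟩, hAs⟩ := hs
      rw [Finset.mem_coe, Finset.mem_powersetCard]
      constructor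
      · exact Finset.sdiff_subset_sdiff hsub (le_refl A)
      · rw [Finset.card_sdiff_of_subset hAs, hcard, hA]
    · intro t ht
      simp only [Finset.mem_coe, Finset.mem_powersetCard] at ht
      obtain ⟨hsub, hcard⟩ := ht
      have hdisj : Disjoint t A := by
        intro x hx1 hx2
        intro y hy
        have h1 := hx1 hy
        have h2 := hx2 hy
        have := hsub h1
        rw [Finset.mem_sdiff] at this
        exact absurd h2 this.2
      rw [Finset.mem_coe, Finset.mem_filter, Finset.mem_powersetCard]
      refine ⟨⟨Finset.subset_univ _, ?_⟩, Finset.subset_union_right⟩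
      rw [Finset.card_union_of_disjoint hdisj, hcard, hA]
      have hjn : j ≤ n := by
        rw [← hA]
        have := Finset.card_le_univ A
        simpa using this
      omega
    · intro s hs
      simp only [Finset.mem_coe, Finset.mem_filter, Finset.mem_powersetCard] at hs
      exact Finset.sdiff_union_of_subset hs.2
    · intro t ht
      simp only [Finset.mem_coe, Finset.mem_powersetCard] at ht
      apply Finset.union_sdiff_cancel_right
      intro x hx1 hx2
      intro y hy
      have h1 := hx1 hy
      have h2 := hx2 hy
      have := ht.1 h1
      rw [Finset.mem_sdiff] at this
      exact absurd h2 this.2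
  rw [hbij, Finset.card_powersetCard, Finset.card_sdiff_of_subset (Finset.subset_univ A), hA]
  simp

end KCE

namespace KCE

open SimpleGraph Finset

open scoped Classical

lemma card_set_coe {n : ℕ} (s : Finset (Fin n)) :
    Fintype.card {x : Fin n // x ∈ (↑s : Set (Fin n))} = s.card := by
  rw [← Fintype.card_coe s]
  exact Fintype.card_congr (Equiv.subtypeEquivRight (fun x => by simp))

lemma exists_perm_of_card_iso {n : ℕ} {G H : SimpleGraph (Fin n)} {s t : Finset (Fin n)}
    (hcard : s.card = t.card)
    (ψ : (SimpleGraph.induce (↑s : Set (Fin n)) G) ≃g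
         (SimpleGraph.induce (↑t : Set (Fin n)) H)) :
    ∃ π : Equiv.Perm (Fin n),
      (∀ x, x ∈ s ↔ π x ∈ t) ∧
      (∀ x y, x ∈ s → y ∈ s → (G.Adj x y ↔ H.Adj (π x) (π y))) := by
  classical
  let e1 : {x : Fin n // x ∈ (↑s : Set (Fin n))} ≃ {x : Fin n // x ∈ (↑t : Set (Fin n))} :=
    ψ.toEquiv
  have hccompl : Fintype.card {x : Fin n // ¬ x ∈ (↑s : Set (Fin n))}
      = Fintype.card {x : Fin n // ¬ x ∈ (↑t : Set (Fin n))} := by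
    rw [Fintype.card_subtype_compl, Fintype.card_subtype_compl, card_set_coe, card_set_coe, hcard]
  have e2 : {x : Fin n // ¬ x ∈ (↑s : Set (Fin n))} ≃ {x : Fin n // ¬ x ∈ (↑t : Set (Fin n))} :=
    Fintype.equivOfCardEq hccompl
  have hleft : ∀ (x : Fin n) (h : x ∈ (↑s : Set (Fin n))),
      Equiv.subtypeCongr e1 e2 x = ↑(e1 ⟨x, h⟩) := by
    intro x h
    show (Equiv.sumCompl _) (Sum.map e1 e2 ((Equiv.sumCompl _).symm x)) = _
    rw [Equiv.sumCompl_symm_apply_of_pos h]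
    rfl
  have hright : ∀ (x : Fin n) (h : ¬ x ∈ (↑s : Set (Fin n))),
      Equiv.subtypeCongr e1 e2 x = ↑(e2 ⟨x, h⟩) := by
    intro x h
    show (Equiv.sumCompl _) (Sum.map e1 e2 ((Equiv.sumCompl _).symm x)) = _
    rw [Equiv.sumCompl_symm_apply_of_neg h]
    rfl
  refine ⟨Equiv.subtypeCongr e1 e2, ?_, ?_⟩
  · intro x
    constructor
    · intro hx
      have hx' : x ∈ (↑s : Set (Fin n)) := Finset.mem_coe.mpr hx
      rw [hleft x hx']
      exact Finset.mem_coe.mp (e1 ⟨x, hx'⟩).2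
    · intro hx
      by_contra hxs
      have hx' : ¬ x ∈ (↑s : Set (Fin n)) := fun h => hxs (Finset.mem_coe.mp h)
      rw [hright x hx'] at hx
      exact (e2 ⟨x, hx'⟩).2 (Finset.mem_coe.mpr hx)
  · intro x y hx hy
    have hx' : x ∈ (↑s : Set (Fin n)) := Finset.mem_coe.mpr hx
    have hy' : y ∈ (↑s : Set (Fin n)) := Finset.mem_coe.mpr hy
    rw [hleft x hx', hleft y hy']
    constructor
    · intro h
      exact ψ.map_adj_iff.mpr h
    · intro h
      exact ψ.map_adj_iff.mp h

end KCE

namespace KCE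

open SimpleGraph Finset

open scoped Classical

variable {n : ℕ} {G H : SimpleGraph (Fin n)} {k : ℕ}

/-- The permutation induces an isomorphism of restricted graphs. -/
def restrIso (π : Equiv.Perm (Fin n)) {s : Finset (Fin n)}
    (hπa : ∀ x y, x ∈ s → y ∈ s → (G.Adj x y ↔ H.Adj (π x) (π y)))
    {W : Finset (Fin n)} (hW : W ⊆ s) :
    restr G ↑W ≃g restr H ↑(W.image π) where
  toEquiv := π
  map_rel_iff' := by
    intro a b
    simp only [restr_adj, Finset.coe_image, Set.mem_image, Finset.mem_coe]
    constructor
    · rintro ⟨hadj, ⟨a', ha', haeq⟩, ⟨b', hb', hbeq⟩⟩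
      have ha2 : a' = a := π.injective haeq
      have hb2 : b' = b := π.injective hbeq
      rw [ha2] at ha'
      rw [hb2] at hb'
      exact ⟨(hπa a b (hW ha') (hW hb')).mpr hadj, ha', hb'⟩
    · rintro ⟨hadj, ha, hb⟩
      exact ⟨(hπa a b (hW ha) (hW hb)).mp hadj, ⟨a, ha, rfl⟩, ⟨b, hb, rfl⟩⟩

lemma mem_image_perm {π : Equiv.Perm (Fin n)} {W : Finset (Fin n)} {x : Fin n} :
    π x ∈ W.image π ↔ x ∈ W := by
  constructor
  · intro h
    obtain ⟨y, hy, hyx⟩ := Finset.mem_image.mp h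
    rwa [π.injective hyx] at hy
  · intro h
    exact Finset.mem_image_of_mem _ h

lemma coe_image_perm (π : Equiv.Perm (Fin n)) (W : Finset (Fin n)) :
    (↑(W.image π) : Set (Fin n)) = ⇑π '' ↑W := Finset.coe_image

lemma iset_transfer (π : Equiv.Perm (Fin n)) {s : Finset (Fin n)}
    (hπa : ∀ x y, x ∈ s → y ∈ s → (G.Adj x y ↔ H.Adj (π x) (π y)))
    {W : Finset (Fin n)} (hW : W ⊆ s) {u v : Fin n} :
    ∀ w, w ∈ iset k G ↑W u v ↔ π w ∈ iset k H ↑(W.image π) (π u) (π v) := by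
  intro w
  have hedist : ∀ a b : Fin n,
      (restr H ↑(W.image π)).edist (π a) (π b) = (restr G ↑W).edist a b :=
    fun a b => edist_iso (restrIso π hπa hW) a b
  unfold iset
  simp only [Set.mem_setOf_eq, Finset.mem_coe]
  constructor
  · rintro ⟨hwW, hd⟩
    refine ⟨mem_image_perm.mpr hwW, ?_⟩
    rcases hd with hd | hd
    · exact Or.inl (by rw [hedist u w]; exact hd)
    · exact Or.inr (by rw [hedist v w]; exact hd)
  · rintro ⟨hwW, hd⟩
    refine ⟨mem_image_perm.mp hwW, ?_⟩
    rcases hd with hd | hd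
    · exact Or.inl (by rw [← hedist u w]; exact hd)
    · exact Or.inr (by rw [← hedist v w]; exact hd)

lemma centralIn_transfer (π : Equiv.Perm (Fin n)) {s : Finset (Fin n)}
    (hπa : ∀ x y, x ∈ s → y ∈ s → (G.Adj x y ↔ H.Adj (π x) (π y)))
    {W : Finset (Fin n)} (hW : W ⊆ s) {u v : Fin n}
    (hu : u ∈ W) (hv : v ∈ W) (hadjG : G.Adj u v) (hadjH : H.Adj (π u) (π v)) :
    CentralIn k G ↑W u v ↔ CentralIn k H ↑(W.image π) (π u) (π v) := by
  have huS : u ∈ (↑W : Set (Fin n)) := hu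
  have hvS : v ∈ (↑W : Set (Fin n)) := hv
  have huS' : π u ∈ (↑(W.image π) : Set (Fin n)) := mem_image_perm.mpr hu
  have hvS' : π v ∈ (↑(W.image π) : Set (Fin n)) := mem_image_perm.mpr hv
  constructor
  · intro hcen
    have c1 : CentralIn k (restr G ↑W) ↑W u v :=
      (centralIn_restr_iff huS hvS hadjG).mpr hcen
    have c2 : CentralIn k (restr H ↑(W.image π)) (⇑π '' ↑W) (π u) (π v) :=
      centralIn_iso_of (restrIso π hπa hW) c1
    have hseteq : (⇑π '' ↑W) = (↑(W.image π) : Set (Fin n)) := (coe_image_perm π W).symm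
    rw [hseteq] at c2
    exact (centralIn_restr_iff huS' hvS' hadjH).mp c2
  · intro hcen
    have c1 : CentralIn k (restr H ↑(W.image π)) ↑(W.image π) (π u) (π v) :=
      (centralIn_restr_iff huS' hvS' hadjH).mpr hcen
    have c2 : CentralIn k (restr G ↑W)
        (⇑π.symm '' ↑(W.image π)) (π.symm (π u)) (π.symm (π v)) :=
      centralIn_iso_of (restrIso π hπa hW).symm c1
    have himg : (⇑π.symm '' ↑(W.image π)) = (↑W : Set (Fin n)) := by
      rw [coe_image_perm]
      ext x
      simp only [Set.mem_image, Finset.mem_coe]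
      constructor
      · rintro ⟨y, ⟨z, hz, hzy⟩, hyx⟩
        rw [← hzy, π.symm_apply_apply] at hyx
        rwa [← hyx]
      · intro hx
        exact ⟨π x, ⟨x, hx, rfl⟩, π.symm_apply_apply x⟩
    rw [himg, π.symm_apply_apply, π.symm_apply_apply] at c2
    exact (centralIn_restr_iff huS hvS hadjG).mp c2

lemma good_transfer (π : Equiv.Perm (Fin n)) {s : Finset (Fin n)}
    (hπa : ∀ x y, x ∈ s → y ∈ s → (G.Adj x y ↔ H.Adj (π x) (π y)))
    {W : Finset (Fin n)} (hW : W ⊆ s) {u v : Fin n} :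
    Good k G ↑W u v ↔ Good k H ↑(W.image π) (π u) (π v) := by
  have hedist : ∀ a b : Fin n,
      (restr H ↑(W.image π)).edist (π a) (π b) = (restr G ↑W).edist a b :=
    fun a b => edist_iso (restrIso π hπa hW) a b
  constructor
  · rintro ⟨hadj, hu, hv, hbl, hcen⟩
    have huW : u ∈ W := hu
    have hvW : v ∈ W := hv
    have hadjH : H.Adj (π u) (π v) := (hπa u v (hW huW) (hW hvW)).mp hadj
    refine ⟨hadjH, mem_image_perm.mpr huW, mem_image_perm.mpr hvW, ?_, ?_⟩
    · intro w' hw'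
      obtain ⟨w, hwW, rfl⟩ := Finset.mem_image.mp hw'
      rcases hbl w hwW with h | h
      · exact Or.inl (by rw [hedist u w]; exact h)
      · exact Or.inr (by rw [hedist v w]; exact h)
    · exact (centralIn_transfer π hπa hW huW hvW hadj hadjH).mp hcen
  · rintro ⟨hadj, hu, hv, hbl, hcen⟩
    have huW : u ∈ W := mem_image_perm.mp hu
    have hvW : v ∈ W := mem_image_perm.mp hv
    have hadjG : G.Adj u v := (hπa u v (hW huW) (hW hvW)).mpr hadj
    refine ⟨hadjG, huW, hvW, ?_, ?_⟩
    · intro w hwW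
      rcases hbl (π w) (mem_image_perm.mpr hwW) with h | h
      · exact Or.inl (by rw [← hedist u w]; exact h)
      · exact Or.inr (by rw [← hedist v w]; exact h)
    · exact (centralIn_transfer π hπa hW huW hvW hadjG hadj).mpr hcen

lemma bdry_transfer (π : Equiv.Perm (Fin n)) {s : Finset (Fin n)}
    (hπa : ∀ x y, x ∈ s → y ∈ s → (G.Adj x y ↔ H.Adj (π x) (π y)))
    {W : Finset (Fin n)} (hW : W ⊆ s) {u v : Fin n} {x : Fin n} (hx : x ∈ s) :
    x ∈ bdry k G ↑W u v ↔ π x ∈ bdry k H ↑(W.image π) (π u) (π v) := by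
  unfold bdry
  simp only [Set.mem_setOf_eq, Finset.mem_coe]
  constructor
  · rintro ⟨hxW, w, hwi, hadj⟩
    have hwW : w ∈ W := hwi.1
    refine ⟨fun h => hxW (mem_image_perm.mp h), π w,
      (iset_transfer π hπa hW w).mp hwi, ?_⟩
    exact (hπa w x (hW hwW) hx).mp hadj
  · rintro ⟨hxW, w', hwi, hadj⟩
    have hw'W : w' ∈ W.image π := hwi.1
    obtain ⟨w, hwW, rfl⟩ := Finset.mem_image.mp hw'W
    refine ⟨fun h => hxW (mem_image_perm.mpr h), w,
      (iset_transfer π hπa hW w).mpr hwi, ?_⟩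
    exact (hπa w x (hW hwW) hx).mpr hadj

end KCE

namespace KCE

open SimpleGraph Finset

open scoped Classical

variable {n : ℕ}

noncomputable def bsetF (k : ℕ) (Γ : SimpleGraph (Fin n)) (u v : Fin n) : Finset (Fin n) :=
  Finset.univ.filter (· ∈ bset k Γ u v)

lemma coe_bsetF (k : ℕ) (Γ : SimpleGraph (Fin n)) (u v : Fin n) :
    (↑(bsetF k Γ u v) : Set (Fin n)) = bset k Γ u v := by
  ext x; simp [bsetF]

noncomputable def bdryF (k : ℕ) (Γ : SimpleGraph (Fin n)) (u v : Fin n)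
    (W : Finset (Fin n)) : Finset (Fin n) :=
  Finset.univ.filter (· ∈ bdry k Γ ↑W u v)

lemma mem_bdryF {k : ℕ} {Γ : SimpleGraph (Fin n)} {u v x : Fin n} {W : Finset (Fin n)} :
    x ∈ bdryF k Γ u v W ↔ x ∈ bdry k Γ ↑W u v := by simp [bdryF]

def TPred (k : ℕ) (Γ : SimpleGraph (Fin n)) (u v : Fin n) (W T : Finset (Fin n)) : Prop :=
  Good k Γ ↑W u v ∧ ↑T ⊆ bdry k Γ (↑W : Set (Fin n)) u v

noncomputable def ΨF (k : ℕ) (Γ : SimpleGraph (Fin n)) (j : ℕ) : ℤ :=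
  ∑ u : Fin n, ∑ v : Fin n, ∑ W : Finset (Fin n), ∑ T : Finset (Fin n),
    if TPred k Γ u v W T ∧ (W ∪ T).card = j then (-1 : ℤ)^T.card else 0

noncomputable def cpairs (k : ℕ) (Γ : SimpleGraph (Fin n)) : ℤ :=
  ∑ u : Fin n, ∑ v : Fin n, if IsKCentralEdge k Γ u v then 1 else 0

lemma inner_T_sum (k : ℕ) (Γ : SimpleGraph (Fin n)) (u v : Fin n) (W : Finset (Fin n)) :
    (∑ T : Finset (Fin n), if TPred k Γ u v W T then (-1 : ℤ)^T.card else 0)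
      = if Good k Γ ↑W u v ∧ bdryF k Γ u v W = ∅ then 1 else 0 := by
  by_cases hG : Good k Γ ↑W u v
  · have hiff : ∀ T : Finset (Fin n), TPred k Γ u v W T ↔ T ∈ (bdryF k Γ u v W).powerset := by
      intro T
      rw [Finset.mem_powerset]
      unfold TPred
      constructor
      · rintro ⟨-, hsub⟩
        intro x hx
        exact mem_bdryF.mpr (hsub hx)
      · intro hsub
        exact ⟨hG, fun x hx => mem_bdryF.mp (hsub hx)⟩
    calc (∑ T : Finset (Fin n), if TPred k Γ u v W T then (-1 : ℤ)^T.card else 0)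
        = ∑ T : Finset (Fin n),
            if T ∈ (bdryF k Γ u v W).powerset then (-1 : ℤ)^T.card else 0 := by
          apply Finset.sum_congr rfl
          intro T _
          rw [if_congr (hiff T) rfl rfl]
      _ = ∑ T ∈ Finset.univ.filter (· ∈ (bdryF k Γ u v W).powerset), (-1 : ℤ)^T.card := by
          rw [Finset.sum_filter]
      _ = ∑ T ∈ (bdryF k Γ u v W).powerset, (-1 : ℤ)^T.card := by
          congr 1
          ext T
          simp
      _ = if (bdryF k Γ u v W) = ∅ then 1 else 0 := sum_powerset_neg_one_pow_card
      _ = if Good k Γ ↑W u v ∧ bdryF k Γ u v W = ∅ then 1 else 0 := by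
          by_cases hb : bdryF k Γ u v W = ∅ <;> simp [hb, hG]
  · have hz : ∀ T : Finset (Fin n), ¬ TPred k Γ u v W T := fun T hT => hG hT.1
    simp [hz, hG]

lemma bdryF_empty_iff {k : ℕ} {Γ : SimpleGraph (Fin n)} {u v : Fin n} {W : Finset (Fin n)} :
    bdryF k Γ u v W = ∅ ↔ bdry k Γ (↑W : Set (Fin n)) u v = ∅ := by
  constructor
  · intro h
    ext x
    simp only [Set.mem_empty_iff_false, iff_false]
    intro hx
    have : x ∈ bdryF k Γ u v W := mem_bdryF.mpr hx
    rw [h] at this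
    simp at this
  · intro h
    ext x
    simp [mem_bdryF, h]

lemma inner_W_sum {k : ℕ} (hk : 1 ≤ k) (Γ : SimpleGraph (Fin n)) (u v : Fin n) :
    (∑ W : Finset (Fin n), if Good k Γ ↑W u v ∧ bdryF k Γ u v W = ∅ then (1 : ℤ) else 0)
      = if IsKCentralEdge k Γ u v then 1 else 0 := by
  have hchar : ∀ W : Finset (Fin n),
      (Good k Γ ↑W u v ∧ bdryF k Γ u v W = ∅) ↔
      (IsKCentralEdge k Γ u v ∧ W = bsetF k Γ u v) := by
    intro W
    constructor
    · rintro ⟨hG, hb⟩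
      obtain ⟨hweq, hcen⟩ := good_unique hk hG (bdryF_empty_iff.mp hb)
      refine ⟨hcen, ?_⟩
      apply Finset.coe_injective
      rw [hweq, coe_bsetF]
    · rintro ⟨hcen, rfl⟩
      obtain ⟨hG, hb⟩ := central_good hk hcen
      constructor
      · rw [coe_bsetF]; exact hG
      · rw [bdryF_empty_iff, coe_bsetF]; exact hb
  calc (∑ W : Finset (Fin n), if Good k Γ ↑W u v ∧ bdryF k Γ u v W = ∅ then (1 : ℤ) else 0)
      = ∑ W : Finset (Fin n),
          if IsKCentralEdge k Γ u v ∧ W = bsetF k Γ u v then (1 : ℤ) else 0 := by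
        apply Finset.sum_congr rfl
        intro W _
        rw [if_congr (hchar W) rfl rfl]
    _ = if IsKCentralEdge k Γ u v then 1 else 0 := by
        by_cases hcen : IsKCentralEdge k Γ u v
        · simp only [hcen, true_and]
          rw [Finset.sum_ite_eq' Finset.univ (bsetF k Γ u v) (fun _ => (1 : ℤ))]
          simp
        · simp [hcen]

lemma claimA {k : ℕ} (hk : 1 ≤ k) (Γ : SimpleGraph (Fin n)) :
    (∑ j ∈ Finset.range (n + 1), ΨF k Γ j) = cpairs k Γ := by
  unfold ΨF cpairs
  rw [Finset.sum_comm]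
  apply Finset.sum_congr rfl
  intro u _
  rw [Finset.sum_comm]
  apply Finset.sum_congr rfl
  intro v _
  have hswap : (∑ j ∈ Finset.range (n + 1), ∑ W : Finset (Fin n), ∑ T : Finset (Fin n),
      if TPred k Γ u v W T ∧ (W ∪ T).card = j then (-1 : ℤ)^T.card else 0)
      = ∑ W : Finset (Fin n), ∑ T : Finset (Fin n), ∑ j ∈ Finset.range (n + 1),
      if TPred k Γ u v W T ∧ (W ∪ T).card = j then (-1 : ℤ)^T.card else 0 := by
    rw [Finset.sum_comm]
    apply Finset.sum_congr rfl
    intro W _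
    rw [Finset.sum_comm]
  rw [hswap]
  have hinner : ∀ W T : Finset (Fin n),
      (∑ j ∈ Finset.range (n + 1),
        if TPred k Γ u v W T ∧ (W ∪ T).card = j then (-1 : ℤ)^T.card else 0)
      = if TPred k Γ u v W T then (-1 : ℤ)^T.card else 0 := by
    intro W T
    by_cases hT : TPred k Γ u v W T
    · simp only [hT, true_and]
      have hmem : (W ∪ T).card ∈ Finset.range (n + 1) := by
        rw [Finset.mem_range]
        have := Finset.card_le_univ (W ∪ T)
        simp only [Finset.card_univ, Fintype.card_fin] at this
        omega
      rw [Finset.sum_ite_eq (Finset.range (n + 1)) ((W ∪ T).card) (fun _ => (-1 : ℤ)^T.card)]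
      simp [hmem]
    · simp [hT]
  calc (∑ W : Finset (Fin n), ∑ T : Finset (Fin n), ∑ j ∈ Finset.range (n + 1),
      if TPred k Γ u v W T ∧ (W ∪ T).card = j then (-1 : ℤ)^T.card else 0)
      = ∑ W : Finset (Fin n), ∑ T : Finset (Fin n),
        if TPred k Γ u v W T then (-1 : ℤ)^T.card else 0 := by
        apply Finset.sum_congr rfl
        intro W _
        apply Finset.sum_congr rfl
        intro T _
        exact hinner W T
    _ = ∑ W : Finset (Fin n), if Good k Γ ↑W u v ∧ bdryF k Γ u v W = ∅ then (1 : ℤ) else 0 := by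
        apply Finset.sum_congr rfl
        intro W _
        exact inner_T_sum k Γ u v W
    _ = if IsKCentralEdge k Γ u v then 1 else 0 := inner_W_sum hk Γ u v

end KCE

namespace KCE

open SimpleGraph Finset

open scoped Classical

variable {n : ℕ}

lemma claimB {k m : ℕ} (hk : 1 ≤ k) (hm : 2*k+2 ≤ m) {Γ : SimpleGraph (Fin n)}
    (hcards : ∀ s : Finset (Fin n), s.card = m →
      (SimpleGraph.induce (↑s : Set (Fin n)) Γ).IsAcyclic ∧
      (k : ℕ∞) < gradius (SimpleGraph.induce (↑s : Set (Fin n)) Γ) ∧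
      gdiam (SimpleGraph.induce (↑s : Set (Fin n)) Γ) ≠ ((2 * k + 1 : ℕ) : ℕ∞))
    {j : ℕ} (hj : m < j) : ΨF k Γ j = 0 := by
  unfold ΨF
  apply Finset.sum_eq_zero; intro u _
  apply Finset.sum_eq_zero; intro v _
  apply Finset.sum_eq_zero; intro W _
  apply Finset.sum_eq_zero; intro T _
  rw [if_neg]
  rintro ⟨hT, hcardj⟩
  have hadj : Γ.Adj u v := hT.1.1
  have hsub : W ∪ T ⊆ bsetF k Γ u v := by
    apply Finset.union_subset
    · intro x hx
      have : x ∈ bset k Γ u v := good_subset_bset hT.1 hx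
      simp [bsetF, this]
    · intro x hx
      have hxb : x ∈ bdry k Γ (↑W : Set (Fin n)) u v := hT.2 hx
      have : x ∈ bset k Γ u v := bdry_subset_bset hk hxb
      simp [bsetF, this]
  have h1 : (W ∪ T).card ≤ (bsetF k Γ u v).card := Finset.card_le_card hsub
  have h2 : (bsetF k Γ u v).card ≤ m := ball_small hk hm hcards hadj
  omega

lemma s_count {m j : ℕ} (hjm : j ≤ m) (A : Finset (Fin n)) (hA : A.card = j) (c : ℤ) :
    (∑ s ∈ (Finset.univ : Finset (Fin n)).powersetCard m, if A ⊆ s then c else 0)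
      = ((n - j).choose (m - j) : ℤ) * c := by
  rw [← Finset.sum_filter, Finset.sum_const, card_supersets A hA hjm, nsmul_eq_mul]

noncomputable def locF (k : ℕ) (Γ : SimpleGraph (Fin n)) (j : ℕ) (s : Finset (Fin n)) : ℤ :=
  ∑ u : Fin n, ∑ v : Fin n, ∑ W : Finset (Fin n), ∑ T : Finset (Fin n),
    if TPred k Γ u v W T ∧ (W ∪ T).card = j ∧ W ∪ T ⊆ s then (-1 : ℤ)^T.card else 0

lemma claimC1 {k m : ℕ} (Γ : SimpleGraph (Fin n)) {j : ℕ} (hjm : j ≤ m) :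
    (∑ s ∈ (Finset.univ : Finset (Fin n)).powersetCard m, locF k Γ j s)
      = ((n - j).choose (m - j) : ℤ) * ΨF k Γ j := by
  unfold locF ΨF
  have hterm : ∀ u v : Fin n, ∀ W T : Finset (Fin n),
      (∑ s ∈ (Finset.univ : Finset (Fin n)).powersetCard m,
        if TPred k Γ u v W T ∧ (W ∪ T).card = j ∧ W ∪ T ⊆ s then (-1 : ℤ)^T.card else 0)
      = ((n - j).choose (m - j) : ℤ) *
        (if TPred k Γ u v W T ∧ (W ∪ T).card = j then (-1 : ℤ)^T.card else 0) := by
    intro u v W T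
    by_cases hPQ : TPred k Γ u v W T ∧ (W ∪ T).card = j
    · have hcong : ∀ s ∈ (Finset.univ : Finset (Fin n)).powersetCard m,
          (if TPred k Γ u v W T ∧ (W ∪ T).card = j ∧ W ∪ T ⊆ s then (-1 : ℤ)^T.card else 0)
          = (if W ∪ T ⊆ s then (-1 : ℤ)^T.card else 0) := by
        intro s _
        by_cases hs : W ∪ T ⊆ s <;> simp [hs, hPQ.1, hPQ.2]
      rw [Finset.sum_congr rfl hcong, s_count hjm (W ∪ T) hPQ.2, if_pos hPQ]
    · have hcong : ∀ s ∈ (Finset.univ : Finset (Fin n)).powersetCard m,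
          (if TPred k Γ u v W T ∧ (W ∪ T).card = j ∧ W ∪ T ⊆ s then (-1 : ℤ)^T.card else 0)
          = 0 := by
        intro s _
        rw [if_neg]
        rintro ⟨h1, h2, -⟩
        exact hPQ ⟨h1, h2⟩
      rw [Finset.sum_congr rfl hcong, Finset.sum_const, if_neg hPQ]
      simp
  calc (∑ s ∈ (Finset.univ : Finset (Fin n)).powersetCard m, ∑ u : Fin n, ∑ v : Fin n,
        ∑ W : Finset (Fin n), ∑ T : Finset (Fin n),
        if TPred k Γ u v W T ∧ (W ∪ T).card = j ∧ W ∪ T ⊆ s then (-1 : ℤ)^T.card else 0)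
      = ∑ u : Fin n, ∑ s ∈ (Finset.univ : Finset (Fin n)).powersetCard m, ∑ v : Fin n,
        ∑ W : Finset (Fin n), ∑ T : Finset (Fin n),
        if TPred k Γ u v W T ∧ (W ∪ T).card = j ∧ W ∪ T ⊆ s then (-1 : ℤ)^T.card else 0 :=
        Finset.sum_comm
    _ = ∑ u : Fin n, ∑ v : Fin n, ∑ W : Finset (Fin n), ∑ T : Finset (Fin n),
        ∑ s ∈ (Finset.univ : Finset (Fin n)).powersetCard m,
        if TPred k Γ u v W T ∧ (W ∪ T).card = j ∧ W ∪ T ⊆ s then (-1 : ℤ)^T.card else 0 := by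
        apply Finset.sum_congr rfl
        intro u _
        rw [Finset.sum_comm]
        apply Finset.sum_congr rfl
        intro v _
        rw [Finset.sum_comm]
        apply Finset.sum_congr rfl
        intro W _
        rw [Finset.sum_comm]
    _ = ∑ u : Fin n, ∑ v : Fin n, ∑ W : Finset (Fin n), ∑ T : Finset (Fin n),
        ((n - j).choose (m - j) : ℤ) *
        (if TPred k Γ u v W T ∧ (W ∪ T).card = j then (-1 : ℤ)^T.card else 0) := by
        apply Finset.sum_congr rfl; intro u _
        apply Finset.sum_congr rfl; intro v _
        apply Finset.sum_congr rfl; intro W _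
        apply Finset.sum_congr rfl; intro T _
        exact hterm u v W T
    _ = ((n - j).choose (m - j) : ℤ) * ∑ u : Fin n, ∑ v : Fin n, ∑ W : Finset (Fin n),
        ∑ T : Finset (Fin n),
        (if TPred k Γ u v W T ∧ (W ∪ T).card = j then (-1 : ℤ)^T.card else 0) := by
        simp only [← Finset.mul_sum]

end KCE

namespace KCE

open SimpleGraph Finset

open scoped Classical

variable {n : ℕ}

lemma locF_transfer {k : ℕ} {G H : SimpleGraph (Fin n)} {s t : Finset (Fin n)}
    (hcard : s.card = t.card)
    (ψ : (SimpleGraph.induce (↑s : Set (Fin n)) G) ≃g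
         (SimpleGraph.induce (↑t : Set (Fin n)) H))
    (j : ℕ) : locF k G j s = locF k H j t := by
  obtain ⟨π, hπmem, hπa⟩ := exists_perm_of_card_iso hcard ψ
  have hπa' : ∀ x y, x ∈ s → y ∈ s → (G.Adj x y ↔ H.Adj (π x) (π y)) := hπa
  have hpt : ∀ (u v : Fin n) (W T : Finset (Fin n)),
      ((TPred k G u v W T ∧ (W ∪ T).card = j ∧ W ∪ T ⊆ s) ↔
       (TPred k H (π u) (π v) (W.image π) (T.image π) ∧
        ((W.image π) ∪ (T.image π)).card = j ∧ (W.image π) ∪ (T.image π) ⊆ t)) := by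
    intro u v W T
    have himgu : (W.image π) ∪ (T.image π) = (W ∪ T).image π := (Finset.image_union _ _).symm
    have hsubiff : (W ∪ T ⊆ s) ↔ ((W.image π) ∪ (T.image π) ⊆ t) := by
      rw [himgu]
      constructor
      · intro h x hx
        obtain ⟨y, hy, rfl⟩ := Finset.mem_image.mp hx
        exact (hπmem y).mp (h hy)
      · intro h x hx
        exact (hπmem x).mpr (h (Finset.mem_image_of_mem _ hx))
    by_cases hsub : W ∪ T ⊆ s
    · have hWs : W ⊆ s := (Finset.subset_union_left).trans hsub
      have hTs : T ⊆ s := (Finset.subset_union_right).trans hsub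
      have hTiff : TPred k G u v W T ↔ TPred k H (π u) (π v) (W.image π) (T.image π) := by
        unfold TPred
        apply and_congr
        · exact good_transfer π hπa' hWs
        · constructor
          · intro h x hx
            have hx' : x ∈ T.image π := hx
            obtain ⟨y, hy, rfl⟩ := Finset.mem_image.mp hx'
            exact (bdry_transfer π hπa' hWs (hTs hy)).mp (h hy)
          · intro h x hx
            have hx' : x ∈ T := hx
            exact (bdry_transfer π hπa' hWs (hTs hx')).mpr
              (h (Finset.mem_image_of_mem _ hx'))
      have hcardiff : ((W ∪ T).card = j) ↔ (((W.image π) ∪ (T.image π)).card = j) := by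
        rw [himgu, Finset.card_image_of_injective _ π.injective]
      exact and_congr hTiff (and_congr hcardiff hsubiff)
    · constructor
      · rintro ⟨-, -, h⟩
        exact absurd h hsub
      · rintro ⟨-, -, h⟩
        exact absurd (hsubiff.mpr h) hsub
  unfold locF
  apply Fintype.sum_equiv π
  intro u
  apply Fintype.sum_equiv π
  intro v
  apply Fintype.sum_equiv (Equiv.finsetCongr π)
  intro W
  apply Fintype.sum_equiv (Equiv.finsetCongr π)
  intro T
  have h1 : Equiv.finsetCongr π W = W.image π := by
    rw [Equiv.finsetCongr_apply, Finset.map_eq_image]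
    rfl
  have h2 : Equiv.finsetCongr π T = T.image π := by
    rw [Equiv.finsetCongr_apply, Finset.map_eq_image]
    rfl
  rw [h1, h2, Finset.card_image_of_injective _ π.injective]
  exact if_congr (hpt u v W T) rfl rfl

end KCE

namespace KCE

open SimpleGraph Finset

open scoped Classical

variable {n : ℕ}

lemma claimC {k m : ℕ} {G H : SimpleGraph (Fin n)} (hmn : m ≤ n)
    (hdeck : SameDeck G H m) {j : ℕ} (hjm : j ≤ m) :
    ΨF k G j = ΨF k H j := by
  obtain ⟨φ, hφ⟩ := hdeck
  have hsum : (∑ s ∈ (Finset.univ : Finset (Fin n)).powersetCard m, locF k G j s)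
      = ∑ s ∈ (Finset.univ : Finset (Fin n)).powersetCard m, locF k H j s := by
    rw [Finset.sum_subtype _ (fun s => Finset.mem_powersetCard_univ) (locF k G j)]
    rw [Finset.sum_subtype _ (fun s => Finset.mem_powersetCard_univ) (locF k H j)]
    calc (∑ a : {s : Finset (Fin n) // s.card = m}, locF k G j ↑a)
        = ∑ a : {s : Finset (Fin n) // s.card = m}, locF k H j ↑(φ a) := by
          apply Finset.sum_congr rfl
          intro a _
          have ψ := Classical.choice (hφ a)
          exact locF_transfer (by rw [a.2, (φ a).2]) ψ j
      _ = ∑ a : {s : Finset (Fin n) // s.card = m}, locF k H j ↑a :=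
          Equiv.sum_comp φ (fun a => locF k H j ↑a)
  have h1 := claimC1 (m := m) (k := k) G (j := j) hjm
  have h2 := claimC1 (m := m) (k := k) H (j := j) hjm
  rw [h1, h2] at hsum
  have hpos : (0 : ℤ) < ((n - j).choose (m - j) : ℤ) := by
    exact_mod_cast Nat.choose_pos (by omega)
  exact mul_left_cancel₀ (ne_of_gt hpos) hsum

lemma hcards_transfer {m : ℕ} {k : ℕ} {G H : SimpleGraph (Fin n)}
    (hdeck : SameDeck G H m)
    (hcards : ∀ s : Finset (Fin n), s.card = m →
      (SimpleGraph.induce (↑s : Set (Fin n)) G).IsAcyclic ∧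
      (k : ℕ∞) < gradius (SimpleGraph.induce (↑s : Set (Fin n)) G) ∧
      gdiam (SimpleGraph.induce (↑s : Set (Fin n)) G) ≠ ((2 * k + 1 : ℕ) : ℕ∞)) :
    ∀ s : Finset (Fin n), s.card = m →
      (SimpleGraph.induce (↑s : Set (Fin n)) H).IsAcyclic ∧
      (k : ℕ∞) < gradius (SimpleGraph.induce (↑s : Set (Fin n)) H) ∧
      gdiam (SimpleGraph.induce (↑s : Set (Fin n)) H) ≠ ((2 * k + 1 : ℕ) : ℕ∞) := by
  obtain ⟨φ, hφ⟩ := hdeck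
  intro t ht
  set a := φ.symm ⟨t, ht⟩ with ha
  have hiso := Classical.choice (hφ a)
  have hfix : φ a = ⟨t, ht⟩ := by rw [ha, Equiv.apply_symm_apply]
  rw [hfix] at hiso
  obtain ⟨hA, hR, hD⟩ := hcards a.1 a.2
  refine ⟨acyclic_iso hiso hA, ?_, ?_⟩
  · rw [gradius_iso hiso]
    exact hR
  · rw [gdiam_iso hiso]
    exact hD

lemma cpairs_two (k : ℕ) (Γ : SimpleGraph (Fin n)) :
    cpairs k Γ =
      2 * (Nat.card {e : Sym2 (Fin n) // ∃ u v, e = s(u, v) ∧ IsKCentralEdge k Γ u v} : ℤ) := by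
  set P : Sym2 (Fin n) → Prop := fun e => ∃ u v, e = s(u, v) ∧ IsKCentralEdge k Γ u v with hP
  have hnat : Nat.card {e : Sym2 (Fin n) // P e} = (Finset.univ.filter P).card := by
    rw [Nat.card_eq_fintype_card, Fintype.card_subtype]
  have hpairsum : cpairs k Γ
      = ((Finset.univ.filter (fun p : Fin n × Fin n => IsKCentralEdge k Γ p.1 p.2)).card : ℤ) := by
    unfold cpairs
    rw [← Fintype.sum_prod_type (f := fun p : Fin n × Fin n =>
      if IsKCentralEdge k Γ p.1 p.2 then (1 : ℤ) else 0)]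
    rw [Finset.sum_boole]
  have hfiber : (Finset.univ.filter (fun p : Fin n × Fin n => IsKCentralEdge k Γ p.1 p.2)).card
      = 2 * (Finset.univ.filter P).card := by
    have hmapsto : ∀ p ∈ Finset.univ.filter (fun p : Fin n × Fin n => IsKCentralEdge k Γ p.1 p.2),
        s(p.1, p.2) ∈ Finset.univ.filter P := by
      intro p hp
      rw [Finset.mem_filter] at hp ⊢
      exact ⟨Finset.mem_univ _, p.1, p.2, rfl, hp.2⟩
    rw [Finset.card_eq_sum_card_fiberwise hmapsto]
    have hconst : ∀ e ∈ Finset.univ.filter P,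
        ((Finset.univ.filter (fun p : Fin n × Fin n => IsKCentralEdge k Γ p.1 p.2)).filter
          (fun p => s(p.1, p.2) = e)).card = 2 := by
      intro e he
      rw [Finset.mem_filter] at he
      obtain ⟨-, u, v, rfl, hc⟩ := he
      have hne : u ≠ v := hc.1.ne
      have hset : ((Finset.univ.filter
          (fun p : Fin n × Fin n => IsKCentralEdge k Γ p.1 p.2)).filter
          (fun p => s(p.1, p.2) = s(u, v))) = {(u, v), (v, u)} := by
        ext ⟨a, b⟩
        simp only [Finset.mem_filter, Finset.mem_univ, true_and, Finset.mem_insert,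
          Finset.mem_singleton, Prod.mk.injEq]
        constructor
        · rintro ⟨hcab, heq⟩
          rcases Sym2.eq_iff.mp heq with ⟨rfl, rfl⟩ | ⟨rfl, rfl⟩
          · exact Or.inl ⟨rfl, rfl⟩
          · exact Or.inr ⟨rfl, rfl⟩
        · rintro (⟨rfl, rfl⟩ | ⟨rfl, rfl⟩)
          · exact ⟨hc, rfl⟩
          · exact ⟨isKCentral_symm hc, Sym2.eq_swap⟩
      rw [hset]
      rw [Finset.card_insert_of_notMem (by
        simp only [Finset.mem_singleton, Prod.mk.injEq]
        rintro ⟨rfl, -⟩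
        exact hne rfl)]
      simp
    rw [Finset.sum_congr rfl hconst, Finset.sum_const, smul_eq_mul, mul_comm]
  rw [hpairsum, hfiber, hnat]
  push_cast
  ring

end KCE



/-- If `2k+2 ≤ n-ℓ`, `G` and `H` have the same `(n-ℓ)`-deck, and every `(n-ℓ)`-vertex
induced subgraph of `G` is acyclic, has radius greater than `k`, and does not have
diameter `2k+1`, then `G` and `H` have the same number of `k`-central edges. -/
theorem num_kcentral_edges_determined (n k ℓ : ℕ) (hℓ : 1 ≤ ℓ) (hk : 1 ≤ k)
    (hn : 2 * k + 2 ≤ n - ℓ)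
    (G H : SimpleGraph (Fin n)) (hdeck : SameDeck G H (n - ℓ))
    (hcards : ∀ s : Finset (Fin n), s.card = n - ℓ →
      (SimpleGraph.induce (↑s : Set (Fin n)) G).IsAcyclic ∧
      (k : ℕ∞) < gradius (SimpleGraph.induce (↑s : Set (Fin n)) G) ∧
      gdiam (SimpleGraph.induce (↑s : Set (Fin n)) G) ≠ ((2 * k + 1 : ℕ) : ℕ∞)) :
    Nat.card {e : Sym2 (Fin n) // ∃ u v, e = s(u, v) ∧ IsKCentralEdge k G u v} =
      Nat.card {e : Sym2 (Fin n) // ∃ u v, e = s(u, v) ∧ IsKCentralEdge k H u v} := by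
  have hmn : n - ℓ ≤ n := Nat.sub_le n ℓ
  have hcardsH := KCE.hcards_transfer hdeck hcards
  have hcp : KCE.cpairs k G = KCE.cpairs k H := by
    rw [← KCE.claimA hk G, ← KCE.claimA hk H]
    apply Finset.sum_congr rfl
    intro j _
    by_cases hjm : j ≤ n - ℓ
    · exact KCE.claimC hmn hdeck hjm
    · rw [KCE.claimB hk hn hcards (by omega), KCE.claimB hk hn hcardsH (by omega)]
  rw [KCE.cpairs_two k G, KCE.cpairs_two k H] at hcp
  have h2 : (2 : ℤ) ≠ 0 := by norm_num
  have := mul_left_cancel₀ h2 hcp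
  exact_mod_cast this
end
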